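/- arXiv:1111.1475 — 8 statements merged into one kernel-verified Lean document; each statement's English description precedes it below -/
import Mathlib

section
/- For real symmetric n×n matrices A₁,…,A_k, the real Lie algebra generated by A₁,…,A_k equals gl(n,ℝ) if and only if the real Lie algebra generated by iA₁,…,iA_k equals u(n) (the skew-Hermitian n×n complex matrices). -/
open Matrix

attribute [local instance 100] LieRing.ofAssociativeRing

namespace Stmt0Aux

variable {n : ℕ}

noncomputable def phi (n : ℕ) : Matrix (Fin n) (Fin n) ℝ →+* Matrix (Fin n) (Fin n) ℂ :=
  Complex.ofRealHom.mapMatrix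

lemma phi_apply (a : Matrix (Fin n) (Fin n) ℝ) : phi n a = a.map Complex.ofReal := rfl

lemma phi_lie (a b : Matrix (Fin n) (Fin n) ℝ) : phi n ⁅a,b⁆ = ⁅phi n a, phi n b⁆ := by
  simp [Ring.lie_def, _root_.map_sub, _root_.map_mul]

lemma phi_smul (r : ℝ) (a : Matrix (Fin n) (Fin n) ℝ) : phi n (r • a) = r • phi n a := by
  ext i j; simp [phi, Complex.ofReal_mul]

lemma phi_transpose (a : Matrix (Fin n) (Fin n) ℝ) : (phi n a)ᴴ = phi n aᵀ := by
  ext i j; simp [phi]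

def reM (X : Matrix (Fin n) (Fin n) ℂ) : Matrix (Fin n) (Fin n) ℝ := X.map Complex.re
def imM (X : Matrix (Fin n) (Fin n) ℂ) : Matrix (Fin n) (Fin n) ℝ := X.map Complex.im

lemma reM_decomp (a b : Matrix (Fin n) (Fin n) ℝ) :
    reM (phi n a + Complex.I • phi n b) = a := by
  ext i j; simp [reM, phi]

lemma imM_decomp (a b : Matrix (Fin n) (Fin n) ℝ) :
    imM (phi n a + Complex.I • phi n b) = b := by
  ext i j; simp [imM, phi]

lemma eq_decomp (X : Matrix (Fin n) (Fin n) ℂ) :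
    X = phi n (reM X) + Complex.I • phi n (imM X) := by
  ext i j
  simp only [Matrix.add_apply, Matrix.smul_apply, phi_apply, reM, imM, Matrix.map_apply,
    smul_eq_mul]
  rw [mul_comm, Complex.re_add_im]

lemma reM_add (X Y : Matrix (Fin n) (Fin n) ℂ) : reM (X + Y) = reM X + reM Y := by
  ext i j; simp [reM]

lemma imM_add (X Y : Matrix (Fin n) (Fin n) ℂ) : imM (X + Y) = imM X + imM Y := by
  ext i j; simp [imM]

lemma reM_smul (r : ℝ) (X : Matrix (Fin n) (Fin n) ℂ) : reM (r • X) = r • reM X := by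
  ext i j; simp [reM, Complex.smul_re]

lemma imM_smul (r : ℝ) (X : Matrix (Fin n) (Fin n) ℂ) : imM (r • X) = r • imM X := by
  ext i j; simp [imM, Complex.smul_im]

lemma reM_zero : reM (0 : Matrix (Fin n) (Fin n) ℂ) = 0 := by ext i j; simp [reM]
lemma imM_zero : imM (0 : Matrix (Fin n) (Fin n) ℂ) = 0 := by ext i j; simp [imM]

lemma lie_formula (a b c d : Matrix (Fin n) (Fin n) ℝ) :
    ⁅phi n a + Complex.I • phi n b, phi n c + Complex.I • phi n d⁆
      = phi n (⁅a,c⁆ - ⁅b,d⁆) + Complex.I • phi n (⁅a,d⁆ + ⁅b,c⁆) := by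
  simp only [lie_add, add_lie, lie_smul, smul_lie, smul_smul, Complex.I_mul_I, neg_one_smul,
    _root_.map_sub, _root_.map_add, phi_lie, smul_add]
  abel

lemma lie_transpose (a b : Matrix (Fin n) (Fin n) ℝ) : (⁅a,b⁆)ᵀ = ⁅bᵀ, aᵀ⁆ := by
  simp [Ring.lie_def, Matrix.transpose_sub, Matrix.transpose_mul]

lemma real_id1 (X Y : Matrix (Fin n) (Fin n) ℝ) :
    (2:ℝ) • (⁅X,Y⁆ + ⁅X,Y⁆ᵀ) = ⁅X+Xᵀ, Y-Yᵀ⁆ + ⁅X-Xᵀ, Y+Yᵀ⁆ := by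
  simp only [Ring.lie_def, Matrix.transpose_mul, Matrix.transpose_sub, Matrix.transpose_add,
    two_smul]
  noncomm_ring

lemma real_id2 (X Y : Matrix (Fin n) (Fin n) ℝ) :
    (2:ℝ) • (⁅X,Y⁆ - ⁅X,Y⁆ᵀ) = ⁅X-Xᵀ, Y-Yᵀ⁆ + ⁅X+Xᵀ, Y+Yᵀ⁆ := by
  simp only [Ring.lie_def, Matrix.transpose_mul, Matrix.transpose_sub, Matrix.transpose_add,
    two_smul]
  noncomm_ring

lemma half_mem {L : Type*} [LieRing L] [LieAlgebra ℝ L] (h : LieSubalgebra ℝ L) {x : L}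
    (hx : (2:ℝ) • x ∈ h) : x ∈ h := by
  have := h.smul_mem (2⁻¹ : ℝ) hx
  rwa [smul_smul, inv_mul_cancel₀ (by norm_num), one_smul] at this

/-- The skew-hermitian matrices as a real Lie subalgebra. -/
def uSub (n : ℕ) : LieSubalgebra ℝ (Matrix (Fin n) (Fin n) ℂ) where
  carrier := {X | Xᴴ = -X}
  add_mem' := by
    intro X Y hX hY
    simp only [Set.mem_setOf_eq] at *
    rw [conjTranspose_add, hX, hY, neg_add]
  zero_mem' := by simp
  smul_mem' := by
    intro r X hX
    simp only [Set.mem_setOf_eq] at *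
    rw [conjTranspose_smul, hX, star_trivial, smul_neg]
  lie_mem' := by
    intro X Y hX hY
    simp only [Set.mem_setOf_eq] at *
    simp only [Ring.lie_def, conjTranspose_sub, conjTranspose_mul, hX, hY]
    noncomm_ring

/-- The pulled-back subalgebra over ℝ used for the (⊆) part: real matrices whose
symmetric part times I and antisymmetric part both land in `h`. -/
def V (h : LieSubalgebra ℝ (Matrix (Fin n) (Fin n) ℂ)) :
    LieSubalgebra ℝ (Matrix (Fin n) (Fin n) ℝ) where
  carrier := {X | Complex.I • phi n (X + Xᵀ) ∈ h ∧ phi n (X - Xᵀ) ∈ h}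
  add_mem' := by
    intro X Y hX hY
    simp only [Set.mem_setOf_eq] at *
    constructor
    · have : (X + Y) + (X + Y)ᵀ = (X + Xᵀ) + (Y + Yᵀ) := by
        rw [Matrix.transpose_add]; abel
      rw [this, _root_.map_add, smul_add]
      exact h.add_mem hX.1 hY.1
    · have : (X + Y) - (X + Y)ᵀ = (X - Xᵀ) + (Y - Yᵀ) := by
        rw [Matrix.transpose_add]; abel
      rw [this, _root_.map_add]
      exact h.add_mem hX.2 hY.2
  zero_mem' := by simp
  smul_mem' := by
    intro r X hX
    simp only [Set.mem_setOf_eq] at *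
    constructor
    · have : (r • X) + (r • X)ᵀ = r • (X + Xᵀ) := by
        rw [Matrix.transpose_smul, smul_add]
      rw [this, phi_smul, smul_comm]
      exact h.smul_mem r hX.1
    · have : (r • X) - (r • X)ᵀ = r • (X - Xᵀ) := by
        rw [Matrix.transpose_smul, smul_sub]
      rw [this, phi_smul]
      exact h.smul_mem r hX.2
  lie_mem' := by
    intro X Y hX hY
    obtain ⟨h1, h2⟩ := hX
    obtain ⟨h3, h4⟩ := hY
    simp only [Set.mem_setOf_eq]
    constructor
    · apply half_mem h
      have key : (2:ℝ) • (Complex.I • phi n (⁅X,Y⁆ + ⁅X,Y⁆ᵀ))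
          = ⁅Complex.I • phi n (X+Xᵀ), phi n (Y-Yᵀ)⁆
            + ⁅phi n (X-Xᵀ), Complex.I • phi n (Y+Yᵀ)⁆ := by
        rw [smul_lie, lie_smul, ← phi_lie, ← phi_lie, ← smul_add, ← _root_.map_add,
          ← real_id1, phi_smul, smul_comm]
      rw [key]
      exact h.add_mem (h.lie_mem h1 h4) (h.lie_mem h2 h3)
    · apply half_mem h
      have key : (2:ℝ) • phi n (⁅X,Y⁆ - ⁅X,Y⁆ᵀ)
          = ⁅phi n (X-Xᵀ), phi n (Y-Yᵀ)⁆
            - ⁅Complex.I • phi n (X+Xᵀ), Complex.I • phi n (Y+Yᵀ)⁆ := by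
        rw [smul_lie, lie_smul, smul_smul, Complex.I_mul_I, neg_one_smul, sub_neg_eq_add,
          ← phi_lie, ← phi_lie, ← _root_.map_add, ← real_id2, phi_smul]
      rw [key]
      exact h.sub_mem (h.lie_mem h2 h4) (h.lie_mem h1 h3)

/-- The push-forward subalgebra over ℂ used for the (⊇) part. -/
def W (g : LieSubalgebra ℝ (Matrix (Fin n) (Fin n) ℝ)) :
    LieSubalgebra ℝ (Matrix (Fin n) (Fin n) ℂ) where
  carrier := {X | reM X ∈ g ∧ (reM X)ᵀ = -reM X ∧ imM X ∈ g ∧ (imM X)ᵀ = imM X}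
  add_mem' := by
    intro X Y hX hY
    obtain ⟨p1, p2, p3, p4⟩ := hX
    obtain ⟨q1, q2, q3, q4⟩ := hY
    refine ⟨?_, ?_, ?_, ?_⟩ <;>
      simp only [reM_add, imM_add, Matrix.transpose_add, p2, q2, p4, q4, neg_add]
    · exact g.add_mem p1 q1
    · exact g.add_mem p3 q3
  zero_mem' :=
    ⟨by simp [reM_zero], by simp [reM_zero], by simp [imM_zero], by simp [imM_zero]⟩
  smul_mem' := by
    intro r X hX
    obtain ⟨p1, p2, p3, p4⟩ := hX
    refine ⟨?_, ?_, ?_, ?_⟩ <;>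
      simp only [reM_smul, imM_smul, Matrix.transpose_smul, p2, p4, smul_neg]
    · exact g.smul_mem r p1
    · exact g.smul_mem r p3
  lie_mem' := by
    intro X Y hX hY
    obtain ⟨p1, p2, p3, p4⟩ := hX
    obtain ⟨q1, q2, q3, q4⟩ := hY
    have hX' := eq_decomp X
    have hY' := eq_decomp Y
    have key : ⁅X, Y⁆ = phi n (⁅reM X, reM Y⁆ - ⁅imM X, imM Y⁆)
        + Complex.I • phi n (⁅reM X, imM Y⁆ + ⁅imM X, reM Y⁆) := by
      conv_lhs => rw [hX', hY']
      exact lie_formula _ _ _ _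
    have hre : reM ⁅X, Y⁆ = ⁅reM X, reM Y⁆ - ⁅imM X, imM Y⁆ := by
      rw [key, reM_decomp]
    have him : imM ⁅X, Y⁆ = ⁅reM X, imM Y⁆ + ⁅imM X, reM Y⁆ := by
      rw [key, imM_decomp]
    refine ⟨?_, ?_, ?_, ?_⟩
    · rw [hre]; exact g.sub_mem (g.lie_mem p1 q1) (g.lie_mem p3 q3)
    · rw [hre, Matrix.transpose_sub, lie_transpose, lie_transpose, p2, q2, p4, q4]
      rw [show ⁅-reM Y, -reM X⁆ = ⁅reM Y, reM X⁆ by simp, ← lie_skew (reM X), ← lie_skew (imM X)]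
      abel
    · rw [him]; exact g.add_mem (g.lie_mem p1 q3) (g.lie_mem p3 q1)
    · rw [him, Matrix.transpose_add, lie_transpose, lie_transpose, p2, q2, p4, q4]
      rw [show ⁅imM Y, -reM X⁆ = -⁅imM Y, reM X⁆ by simp,
        show ⁅-reM Y, imM X⁆ = -⁅reM Y, imM X⁆ by simp,
        ← lie_skew (reM X), ← lie_skew (imM X)]

end Stmt0Aux

open Stmt0Aux

/-- For real symmetric n×n matrices A₁,…,A_k, the real Lie algebra generated by
the A_j equals gl(n,ℝ) iff the real Lie algebra generated by the iA_j equals u(n). -/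
theorem stmt_0 (n k : ℕ) (A : Fin k → Matrix (Fin n) (Fin n) ℝ)
    (hsymm : ∀ j, (A j).IsSymm) :
    LieSubalgebra.lieSpan ℝ (Matrix (Fin n) (Fin n) ℝ) (Set.range A) = ⊤ ↔
    (LieSubalgebra.lieSpan ℝ (Matrix (Fin n) (Fin n) ℂ)
        (Set.range fun j => Complex.I • (A j).map (Complex.ofReal)) :
        Set (Matrix (Fin n) (Fin n) ℂ))
      = {X : Matrix (Fin n) (Fin n) ℂ | Xᴴ = -X} := by
  set g := LieSubalgebra.lieSpan ℝ (Matrix (Fin n) (Fin n) ℝ) (Set.range A) with hg_def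
  set h := LieSubalgebra.lieSpan ℝ (Matrix (Fin n) (Fin n) ℂ)
      (Set.range fun j => Complex.I • (A j).map (Complex.ofReal)) with hh_def
  have hmap : ∀ j, (A j).map Complex.ofReal = phi n (A j) := fun j => rfl
  constructor
  · intro hg
    apply Set.Subset.antisymm
    · -- h ⊆ skew-hermitian
      have : h ≤ uSub n := by
        rw [hh_def]
        apply LieSubalgebra.lieSpan_le.mpr
        rintro _ ⟨j, rfl⟩
        have hstar : star Complex.I = -Complex.I := by simp
        show (Complex.I • (A j).map Complex.ofReal)ᴴ = -(Complex.I • (A j).map Complex.ofReal)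
        rw [conjTranspose_smul, hmap, phi_transpose, (hsymm j).eq, hstar, neg_smul]
      exact this
    · -- skew-hermitian ⊆ h, via V
      have hV : ∀ M : Matrix (Fin n) (Fin n) ℝ, M ∈ V h := by
        have hle : g ≤ V h := by
          rw [hg_def]
          apply LieSubalgebra.lieSpan_le.mpr
          rintro _ ⟨j, rfl⟩
          constructor
          · have : A j + (A j)ᵀ = (2:ℝ) • A j := by rw [(hsymm j).eq, two_smul]
            rw [this, phi_smul, smul_comm]
            exact h.smul_mem 2 (LieSubalgebra.subset_lieSpan ⟨j, (congrArg _ (hmap j))⟩)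
          · rw [(hsymm j).eq, sub_self, _root_.map_zero]
            exact h.zero_mem
        intro M
        exact (hg ▸ hle : (⊤ : LieSubalgebra ℝ _) ≤ V h) (LieSubalgebra.mem_top M)
      intro X hX
      have hX' : Xᴴ = -X := hX
      have hKanti : (reM X)ᵀ = -(reM X) := by
        ext i j
        have := congrFun (congrFun hX' i) j
        simp only [conjTranspose_apply, Matrix.neg_apply] at this
        simp only [Matrix.transpose_apply, Matrix.neg_apply, reM, Matrix.map_apply]
        have h2 := congrArg Complex.re this
        simpa using h2
      have hSsym : (imM X)ᵀ = imM X := by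
        ext i j
        have := congrFun (congrFun hX' i) j
        simp only [conjTranspose_apply, Matrix.neg_apply] at this
        simp only [Matrix.transpose_apply, imM, Matrix.map_apply]
        have h2 := congrArg Complex.im this
        simpa using h2
      have h1 : phi n (reM X) ∈ h := by
        apply half_mem h
        have := (hV (reM X)).2
        rwa [hKanti, sub_neg_eq_add, ← two_smul ℝ, phi_smul] at this
      have h2 : Complex.I • phi n (imM X) ∈ h := by
        apply half_mem h
        have := (hV (imM X)).1
        rwa [hSsym, ← two_smul ℝ, phi_smul, smul_comm Complex.I (2:ℝ) (phi n (imM X))] at this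
      have : X ∈ h := by
        rw [eq_decomp X]
        exact h.add_mem h1 h2
      exact this
  · intro hh
    have hW : h ≤ W g := by
      rw [hh_def]
      apply LieSubalgebra.lieSpan_le.mpr
      rintro _ ⟨j, rfl⟩
      show Complex.I • (A j).map Complex.ofReal ∈ W g
      rw [hmap]
      refine ⟨?_, ?_, ?_, ?_⟩
      · rw [show reM (Complex.I • phi n (A j)) = 0 by ext i l; simp [reM, phi]]
        exact g.zero_mem
      · rw [show reM (Complex.I • phi n (A j)) = 0 by ext i l; simp [reM, phi]]
        simp
      · rw [show imM (Complex.I • phi n (A j)) = A j by ext i l; simp [imM, phi]]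
        exact LieSubalgebra.subset_lieSpan ⟨j, rfl⟩
      · rw [show imM (Complex.I • phi n (A j)) = A j by ext i l; simp [imM, phi]]
        exact (hsymm j).eq
    have hskew : ∀ X : Matrix (Fin n) (Fin n) ℂ, Xᴴ = -X → X ∈ W g := by
      intro X hX
      have : X ∈ (h : Set (Matrix (Fin n) (Fin n) ℂ)) := by rw [hh]; exact hX
      exact hW this
    rw [eq_top_iff]
    intro M _
    have hS : (2⁻¹:ℝ) • (M + Mᵀ) ∈ g := by
      set S := (2⁻¹:ℝ) • (M + Mᵀ) with hS_def
      have hSsym : Sᵀ = S := by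
        rw [hS_def, Matrix.transpose_smul, Matrix.transpose_add, Matrix.transpose_transpose,
          add_comm]
      have hXskew : (Complex.I • phi n S)ᴴ = -(Complex.I • phi n S) := by
        have hstar : star Complex.I = -Complex.I := by simp
        rw [conjTranspose_smul, phi_transpose, hSsym, hstar, neg_smul]
      have := (hskew _ hXskew).2.2.1
      rwa [show imM (Complex.I • phi n S) = S by ext i l; simp [imM, phi]] at this
    have hK : (2⁻¹:ℝ) • (M - Mᵀ) ∈ g := by
      set K := (2⁻¹:ℝ) • (M - Mᵀ) with hK_def
      have hKanti : Kᵀ = -K := by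
        rw [hK_def, Matrix.transpose_smul, Matrix.transpose_sub, Matrix.transpose_transpose,
          ← smul_neg, neg_sub]
      have hXskew : (phi n K)ᴴ = -(phi n K) := by
        rw [phi_transpose, hKanti, _root_.map_neg]
      have := (hskew _ hXskew).1
      rwa [show reM (phi n K) = K by ext i l; simp [reM, phi]] at this
    have hM : M = (2⁻¹:ℝ) • (M + Mᵀ) + (2⁻¹:ℝ) • (M - Mᵀ) := by
      rw [smul_add, smul_sub]; module
    rw [hM]
    exact g.add_mem hS hK
end

section
/- Let A and L be real symmetric n×n matrices such that the real Lie algebra generated by iA and iL is all of u(n). Then the span S of all iterated brackets ad_{iA}^{k₁} ad_{iL}^{k₂} ⋯ ad_{iA}^{k_{s−1}} ad_{iL}^{k_s} [iA,iL] (over all nonnegative integer exponents) equals su(n). -/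
open Matrix

attribute [local instance 100] LieRing.ofAssociativeRing

lemma ct_std {n : Type*} [DecidableEq n] (j k : n) (a : ℂ) :
    (single j k a)ᴴ = single k j (star a) := by
  ext p q
  simp only [conjTranspose_apply, single, of_apply]
  split_ifs with h1 h2 h2 <;> simp_all [and_comm]

lemma skew_lie {n : Type*} [DecidableEq n] [Fintype n] {X Y : Matrix n n ℂ}
    (hX : Xᴴ = -X) (hY : Yᴴ = -Y) : ⁅X, Y⁆ᴴ = -⁅X, Y⁆ := by
  simp [Ring.lie_def, conjTranspose_sub, conjTranspose_mul, hX, hY, Matrix.neg_mul,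
    Matrix.mul_neg, neg_sub]

lemma trace_lie {n : Type*} [DecidableEq n] [Fintype n] (X Y : Matrix n n ℂ) :
    (⁅X, Y⁆ : Matrix n n ℂ).trace = 0 := by
  rw [Ring.lie_def, trace_sub, trace_mul_comm, sub_self]

lemma real_smul_mat {m : Type*} (r : ℝ) (M : Matrix m m ℂ) : r • M = (r : ℂ) • M := by
  ext p q
  simp [Matrix.smul_apply, Complex.real_smul]

lemma aux_brkt1 {n : Type*} [DecidableEq n] [Fintype n] {j k : n} (h : j ≠ k) :
    ⁅Complex.I • single j j (1:ℂ), single j k (1:ℂ) - single k j 1⁆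
      = Complex.I • (single j k (1:ℂ) + single k j 1) := by
  rw [Ring.lie_def]
  simp only [Matrix.smul_mul, Matrix.mul_smul, Matrix.sub_mul, Matrix.mul_sub,
    single_mul_single_same, single_mul_single_of_ne _ _ _ _ h,
    single_mul_single_of_ne _ _ _ _ h.symm, one_mul]
  module

lemma aux_brkt2 {n : Type*} [DecidableEq n] [Fintype n] {j k : n} (h : j ≠ k) :
    ⁅Complex.I • (single j k (1:ℂ) + single k j 1),
      Complex.I • single j j (1:ℂ)⁆
      = single j k (1:ℂ) - single k j 1 := by
  rw [Ring.lie_def]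
  simp only [Matrix.smul_mul, Matrix.mul_smul, Matrix.add_mul, Matrix.mul_add,
    single_mul_single_same, single_mul_single_of_ne _ _ _ _ h,
    single_mul_single_of_ne _ _ _ _ h.symm, one_mul, smul_smul, Complex.I_mul_I]
  match_scalars <;> simp [Complex.I_sq]

lemma aux_brkt3 {n : Type*} [DecidableEq n] [Fintype n] {j k : n} (h : j ≠ k) :
    ⁅single j k (1:ℂ) - single k j 1,
      Complex.I • (single j k (1:ℂ) + single k j 1)⁆
      = (2:ℝ) • (Complex.I • (single j j (1:ℂ) - single k k 1)) := by
  rw [Ring.lie_def]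
  simp only [Matrix.smul_mul, Matrix.mul_smul, Matrix.add_mul, Matrix.mul_add,
    Matrix.sub_mul, Matrix.mul_sub,
    single_mul_single_same, single_mul_single_of_ne _ _ _ _ h,
    single_mul_single_of_ne _ _ _ _ h.symm, one_mul]
  module

/-- If A, L are real symmetric n×n matrices and the real Lie algebra generated by
iA and iL is u(n), then the span of all iterated brackets
ad_{iA}^{k₁} ad_{iL}^{k₂} ⋯ [iA,iL] equals su(n). -/
theorem stmt_3 (n : ℕ) (A L : Matrix (Fin n) (Fin n) ℝ)
    (hA : A.IsSymm) (hL : L.IsSymm)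
    (iA : Matrix (Fin n) (Fin n) ℂ) (iL : Matrix (Fin n) (Fin n) ℂ)
    (hiA : iA = Complex.I • A.map Complex.ofReal)
    (hiL : iL = Complex.I • L.map Complex.ofReal)
    (hgen : (LieSubalgebra.lieSpan ℝ (Matrix (Fin n) (Fin n) ℂ) {iA, iL} :
        Set (Matrix (Fin n) (Fin n) ℂ)) = {X | Xᴴ = -X}) :
    (Submodule.span ℝ
        {X : Matrix (Fin n) (Fin n) ℂ |
          ∃ w : List Bool,
            X = w.foldr (fun b Y => if b then ⁅iA, Y⁆ else ⁅iL, Y⁆) ⁅iA, iL⁆} :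
        Set (Matrix (Fin n) (Fin n) ℂ))
      = {X : Matrix (Fin n) (Fin n) ℂ | Xᴴ = -X ∧ X.trace = 0} := by
  classical
  set g := LieSubalgebra.lieSpan ℝ (Matrix (Fin n) (Fin n) ℂ) {iA, iL} with hg
  set gen : Set (Matrix (Fin n) (Fin n) ℂ) := {X : Matrix (Fin n) (Fin n) ℂ |
      ∃ w : List Bool, X = w.foldr (fun b Y => if b then ⁅iA, Y⁆ else ⁅iL, Y⁆) ⁅iA, iL⁆}
    with hgendef
  set S : Submodule ℝ (Matrix (Fin n) (Fin n) ℂ) := Submodule.span ℝ gen with hS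
  -- basic skewness of iA, iL
  have hmapA : (A.map (Complex.ofReal))ᴴ = A.map Complex.ofReal := by
    ext p q
    simp only [conjTranspose_apply, Matrix.map_apply, Complex.conj_ofReal,
      RCLike.star_def]
    have h := congrFun (congrFun hA q) p
    rw [Matrix.transpose_apply] at h
    exact_mod_cast h.symm
  have hmapL : (L.map (Complex.ofReal))ᴴ = L.map Complex.ofReal := by
    ext p q
    simp only [conjTranspose_apply, Matrix.map_apply, Complex.conj_ofReal,
      RCLike.star_def]
    have h := congrFun (congrFun hL q) p
    rw [Matrix.transpose_apply] at h
    exact_mod_cast h.symm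
  have hiAskew : iAᴴ = -iA := by
    rw [hiA, conjTranspose_smul, hmapA]
    simp [Complex.star_def, Complex.conj_I, neg_smul]
  have hiLskew : iLᴴ = -iL := by
    rw [hiL, conjTranspose_smul, hmapL]
    simp [Complex.star_def, Complex.conj_I, neg_smul]
  have hiAg : iA ∈ g := LieSubalgebra.subset_lieSpan (Set.mem_insert _ _)
  have hiLg : iL ∈ g := LieSubalgebra.subset_lieSpan (Set.mem_insert_of_mem _ rfl)
  -- properties of the generating words
  have key : ∀ w : List Bool,
      ((w.foldr (fun b Y => if b then ⁅iA, Y⁆ else ⁅iL, Y⁆) ⁅iA, iL⁆)ᴴ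
        = -(w.foldr (fun b Y => if b then ⁅iA, Y⁆ else ⁅iL, Y⁆) ⁅iA, iL⁆))
      ∧ (w.foldr (fun b Y => if b then ⁅iA, Y⁆ else ⁅iL, Y⁆) ⁅iA, iL⁆).trace = 0
      ∧ w.foldr (fun b Y => if b then ⁅iA, Y⁆ else ⁅iL, Y⁆) ⁅iA, iL⁆ ∈ g := by
    intro w
    induction w with
    | nil =>
      exact ⟨skew_lie hiAskew hiLskew, trace_lie _ _, g.lie_mem hiAg hiLg⟩
    | cons b t ih =>
      rcases ih with ⟨ih1, _, ih3⟩
      cases b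
      · exact ⟨skew_lie hiLskew ih1, trace_lie _ _, g.lie_mem hiLg ih3⟩
      · exact ⟨skew_lie hiAskew ih1, trace_lie _ _, g.lie_mem hiAg ih3⟩
  have hgenskew : ∀ X ∈ gen, Xᴴ = -X ∧ X.trace = 0 := by
    rintro X ⟨w, rfl⟩; exact ⟨(key w).1, (key w).2.1⟩
  have hgeng : gen ⊆ (g : Set (Matrix (Fin n) (Fin n) ℂ)) := by
    rintro X ⟨w, rfl⟩; exact (key w).2.2
  -- membership in g from skewness
  have hmemg : ∀ Z : Matrix (Fin n) (Fin n) ℂ, Zᴴ = -Z → Z ∈ g := by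
    intro Z hZ
    have : Z ∈ (g : Set (Matrix (Fin n) (Fin n) ℂ)) := by rw [hgen]; exact hZ
    exact this
  -- ad-stability of S under elements of g
  have hA1 : ∀ Y ∈ S, ⁅iA, Y⁆ ∈ S := by
    intro Y hY
    induction hY using Submodule.span_induction with
    | mem x hx =>
      rcases hx with ⟨w, rfl⟩
      exact Submodule.subset_span ⟨true :: w, rfl⟩
    | zero => rw [lie_zero]; exact S.zero_mem
    | add x y hx hy ihx ihy => rw [lie_add]; exact S.add_mem ihx ihy
    | smul a x hx ih => rw [lie_smul]; exact S.smul_mem a ih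
  have hL1 : ∀ Y ∈ S, ⁅iL, Y⁆ ∈ S := by
    intro Y hY
    induction hY using Submodule.span_induction with
    | mem x hx =>
      rcases hx with ⟨w, rfl⟩
      exact Submodule.subset_span ⟨false :: w, rfl⟩
    | zero => rw [lie_zero]; exact S.zero_mem
    | add x y hx hy ihx ihy => rw [lie_add]; exact S.add_mem ihx ihy
    | smul a x hx ih => rw [lie_smul]; exact S.smul_mem a ih
  let K : LieSubalgebra ℝ (Matrix (Fin n) (Fin n) ℂ) :=
    { carrier := {Z : Matrix (Fin n) (Fin n) ℂ | ∀ Y ∈ S, ⁅Z, Y⁆ ∈ S}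
      add_mem' := by
        intro a b ha hb Y hY
        rw [add_lie]; exact S.add_mem (ha Y hY) (hb Y hY)
      zero_mem' := by
        intro Y hY
        rw [zero_lie]; exact S.zero_mem
      smul_mem' := by
        intro c a ha Y hY
        rw [smul_lie]; exact S.smul_mem c (ha Y hY)
      lie_mem' := by
        intro a b ha hb Y hY
        rw [lie_lie]
        exact S.sub_mem (ha _ (hb Y hY)) (hb _ (ha Y hY)) }
  have hgK : g ≤ K := by
    rw [hg]
    refine LieSubalgebra.lieSpan_le.mpr ?_
    rintro x hx
    rcases hx with rfl | hx
    · exact hA1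
    · rcases hx with rfl
      exact hL1
  have hstab : ∀ Z ∈ g, ∀ Y ∈ S, ⁅Z, Y⁆ ∈ S := fun Z hZ => hgK hZ
  -- T = S ⊔ span{iA, iL}
  set T : Submodule ℝ (Matrix (Fin n) (Fin n) ℂ) := S ⊔ Submodule.span ℝ {iA, iL} with hT
  have hTg : ∀ x ∈ T, x ∈ g := by
    intro x hx
    have h1 : T ≤ g.toSubmodule := by
      refine sup_le ?_ ?_
      · exact Submodule.span_le.mpr hgeng
      · refine Submodule.span_le.mpr ?_
        rintro y (rfl | hy)
        · exact hiAg
        · rcases hy with rfl; exact hiLg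
    exact h1 hx
  have hbase : ⁅iA, iL⁆ ∈ S := Submodule.subset_span ⟨[], rfl⟩
  have hTA : ∀ x ∈ T, ⁅iA, x⁆ ∈ S := by
    intro x hx
    rcases Submodule.mem_sup.mp hx with ⟨s, hs, t, ht, rfl⟩
    rw [lie_add]
    refine S.add_mem (hA1 s hs) ?_
    clear hx
    induction ht using Submodule.span_induction with
    | mem y hy =>
      rcases hy with rfl | hy
      · rw [lie_self]; exact S.zero_mem
      · rcases hy with rfl; exact hbase
    | zero => rw [lie_zero]; exact S.zero_mem
    | add a b hxa hxb iha ihb => rw [lie_add]; exact S.add_mem iha ihb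
    | smul c a hxa iha => rw [lie_smul]; exact S.smul_mem c iha
  have hTL : ∀ x ∈ T, ⁅iL, x⁆ ∈ S := by
    intro x hx
    rcases Submodule.mem_sup.mp hx with ⟨s, hs, t, ht, rfl⟩
    rw [lie_add]
    refine S.add_mem (hL1 s hs) ?_
    clear hx
    induction ht using Submodule.span_induction with
    | mem y hy =>
      rcases hy with rfl | hy
      · rw [← lie_skew]; exact S.neg_mem hbase
      · rcases hy with rfl; rw [lie_self]; exact S.zero_mem
    | zero => rw [lie_zero]; exact S.zero_mem
    | add a b hxa hxb iha ihb => rw [lie_add]; exact S.add_mem iha ihb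
    | smul c a hxa iha => rw [lie_smul]; exact S.smul_mem c iha
  have hTT : ∀ x ∈ T, ∀ y ∈ T, ⁅x, y⁆ ∈ S := by
    intro x hx y hy
    rcases Submodule.mem_sup.mp hy with ⟨s, hs, t, ht, rfl⟩
    rw [lie_add]
    refine S.add_mem (hstab x (hTg x hx) s hs) ?_
    clear hy
    induction ht using Submodule.span_induction with
    | mem z hz =>
      rcases hz with rfl | hz
      · rw [← lie_skew]; exact S.neg_mem (hTA x hx)
      · rcases hz with rfl; rw [← lie_skew]; exact S.neg_mem (hTL x hx)
    | zero => rw [lie_zero]; exact S.zero_mem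
    | add a b hxa hxb iha ihb => rw [lie_add]; exact S.add_mem iha ihb
    | smul c a hxa iha => rw [lie_smul]; exact S.smul_mem c iha
  let K2 : LieSubalgebra ℝ (Matrix (Fin n) (Fin n) ℂ) :=
    { T with
      lie_mem' := fun {x y} hx hy => Submodule.mem_sup_left (hTT x hx y hy) }
  have hgT : ∀ Z ∈ g, Z ∈ T := by
    intro Z hZ
    have h1 : g ≤ K2 := by
      rw [hg]
      refine LieSubalgebra.lieSpan_le.mpr ?_
      rintro x (rfl | hx)
      · exact Submodule.mem_sup_right (Submodule.subset_span (Set.mem_insert _ _))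
      · rcases hx with rfl
        exact Submodule.mem_sup_right (Submodule.subset_span (Set.mem_insert_of_mem _ rfl))
    exact h1 hZ
  have hbrkt : ∀ Z W : Matrix (Fin n) (Fin n) ℂ, Zᴴ = -Z → Wᴴ = -W → ⁅Z, W⁆ ∈ S := fun Z W hZ hW =>
    hTT Z (hgT Z (hmemg Z hZ)) W (hgT W (hmemg W hW))
  -- skewness of basis elements
  have hDskew : ∀ j : Fin n, (Complex.I • single j j (1:ℂ))ᴴ
      = -(Complex.I • single j j (1:ℂ)) := by
    intro j
    rw [conjTranspose_smul, ct_std]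
    simp [Complex.star_def, Complex.conj_I, neg_smul]
  have hFskew : ∀ j k : Fin n, (single j k (1:ℂ) - single k j 1)ᴴ
      = -(single j k (1:ℂ) - single k j 1) := by
    intro j k
    rw [conjTranspose_sub, ct_std, ct_std]
    simp [neg_sub]
  have hGskew : ∀ j k : Fin n,
      (Complex.I • (single j k (1:ℂ) + single k j 1))ᴴ
      = -(Complex.I • (single j k (1:ℂ) + single k j 1)) := by
    intro j k
    rw [conjTranspose_smul, conjTranspose_add, ct_std, ct_std]
    simp [Complex.star_def, Complex.conj_I, neg_smul, add_comm]
  -- memberships of basis elements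
  have hFmem : ∀ j k : Fin n, j ≠ k →
      single j k (1:ℂ) - single k j 1 ∈ S := by
    intro j k h
    have := hbrkt _ _ (hGskew j k) (hDskew j)
    rwa [aux_brkt2 h] at this
  have hGmem : ∀ j k : Fin n, j ≠ k →
      Complex.I • (single j k (1:ℂ) + single k j 1) ∈ S := by
    intro j k h
    have := hbrkt _ _ (hDskew j) (hFskew j k)
    rwa [aux_brkt1 h] at this
  have hHmem : ∀ j k : Fin n, j ≠ k →
      Complex.I • (single j j (1:ℂ) - single k k 1) ∈ S := by
    intro j k h
    have h2 := S.smul_mem ((1:ℝ)/2) (hbrkt _ _ (hFskew j k) (hGskew j k))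
    rw [aux_brkt3 h, smul_smul] at h2
    norm_num at h2
    exact h2
  -- now prove the set equality
  ext X
  simp only [SetLike.mem_coe, Set.mem_setOf_eq]
  constructor
  · intro hX
    induction hX using Submodule.span_induction with
    | mem x hx => exact hgenskew x hx
    | zero => constructor <;> simp
    | add x y hx hy ihx ihy =>
      exact ⟨by rw [conjTranspose_add, ihx.1, ihy.1, neg_add],
        by rw [trace_add, ihx.2, ihy.2, add_zero]⟩
    | smul a x hx ih =>
      exact ⟨by rw [conjTranspose_smul, ih.1, star_trivial, smul_neg],
        by rw [trace_smul, ih.2, smul_zero]⟩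
  · rintro ⟨hX1, hX2⟩
    rcases Nat.eq_zero_or_pos n with hn | hn
    · subst hn
      have : X = 0 := by ext p q; exact p.elim0
      rw [this]; exact S.zero_mem
    -- n ≥ 1
    set z : Fin n := ⟨0, hn⟩ with hz
    have hentry : ∀ p q : Fin n, star (X q p) = -X p q := by
      intro p q
      have h := congrFun (congrFun hX1 p) q
      simpa [conjTranspose_apply, Matrix.neg_apply] using h
    have hdiag : ∀ p : Fin n, X p p = ((X p p).im : ℂ) * Complex.I := by
      intro p
      have h := hentry p p
      have hre : (X p p).re = 0 := by
        have h2 := congrArg Complex.re h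
        simp [Complex.star_def] at h2
        linarith
      rw [← Complex.re_add_im (X p p), hre]
      simp
    -- sum decomposition
    have hXsum : X = ∑ j, ∑ k, X j k • single j k (1:ℂ) := by
      conv_lhs => rw [matrix_eq_sum_single X]
      refine Finset.sum_congr rfl fun j _ => Finset.sum_congr rfl fun k _ => ?_
      rw [smul_single, smul_eq_mul, mul_one]
    have hsplit : X = (∑ j, X j j • single j j (1:ℂ))
        + ∑ j, ∑ k, (if j = k then 0 else X j k • single j k (1:ℂ)) := by
      conv_lhs => rw [hXsum]
      rw [← Finset.sum_add_distrib]
      refine Finset.sum_congr rfl fun j _ => ?_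
      have h1 : ∀ k : Fin n, X j k • single j k (1:ℂ)
          = (if j = k then X j k • single j k (1:ℂ) else 0)
            + (if j = k then 0 else X j k • single j k (1:ℂ)) := by
        intro k; split <;> simp
      rw [Finset.sum_congr rfl fun k _ => h1 k, Finset.sum_add_distrib,
        Finset.sum_ite_eq]
      simp
    -- diagonal part
    have htr0 : (∑ j, (((X j j).im : ℂ) * Complex.I)) = 0 := by
      have h0 : ∑ j, X j j = 0 := by
        have := hX2
        rw [Matrix.trace] at this
        simpa [Matrix.diag] using this
      calc (∑ j, (((X j j).im : ℂ) * Complex.I)) = ∑ j, X j j := by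
            refine Finset.sum_congr rfl fun j _ => (hdiag j).symm
        _ = 0 := h0
    have hdiagsum : (∑ j, X j j • single j j (1:ℂ))
        = ∑ j, (X j j).im • (Complex.I •
            (single j j (1:ℂ) - single z z 1)) := by
      have hterm : ∀ j : Fin n, (X j j).im • (Complex.I •
            (single j j (1:ℂ) - single z z 1))
          = X j j • single j j (1:ℂ)
            - (((X j j).im : ℂ) * Complex.I) • single z z (1:ℂ) := by
        intro j
        rw [real_smul_mat, smul_smul, smul_sub, ← hdiag j]
      rw [Finset.sum_congr rfl fun j _ => hterm j, Finset.sum_sub_distrib,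
        ← Finset.sum_smul, htr0, zero_smul, sub_zero]
    have hdiagmem : (∑ j, X j j • single j j (1:ℂ)) ∈ S := by
      rw [hdiagsum]
      refine Submodule.sum_mem _ fun j _ => ?_
      by_cases hjz : j = z
      · subst hjz
        simp only [sub_self, smul_zero]
        exact S.zero_mem
      · exact S.smul_mem _ (hHmem j z hjz)
    -- off-diagonal part
    have hFG : ∀ j k : Fin n, j ≠ k →
        ((1:ℝ)/2) • ((X j k).re • (single j k (1:ℂ) - single k j 1)
          + (X j k).im • (Complex.I • (single j k (1:ℂ) + single k j 1)))
        = ((1:ℂ)/2) • (X j k • single j k (1:ℂ)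
            + X k j • single k j (1:ℂ)) := by
      intro j k h
      obtain ⟨r, i, hr, hi⟩ : ∃ r i : ℝ, (X j k).re = r ∧ (X j k).im = i :=
        ⟨_, _, rfl, rfl⟩
      have hXjk : X j k = (r : ℂ) + i * Complex.I := by
        rw [← hr, ← hi]; exact (Complex.re_add_im _).symm
      have hXkj : X k j = -(r : ℂ) + i * Complex.I := by
        have h2 : X k j = -star (X j k) := by
          have h3 := hentry k j
          rw [h3, neg_neg]
        rw [h2, ← hr, ← hi]
        apply Complex.ext <;> simp [Complex.star_def]
      rw [hr, hi, real_smul_mat ((1:ℝ)/2), real_smul_mat r, real_smul_mat i,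
        hXjk, hXkj]
      push_cast
      module
    have hsum2 : (∑ j, ∑ k, (if j = k then (0 : Matrix (Fin n) (Fin n) ℂ) else
          ((1:ℂ)/2) • (X j k • single j k (1:ℂ)
            + X k j • single k j (1:ℂ))))
        = ∑ j, ∑ k, (if j = k then 0 else X j k • single j k (1:ℂ)) := by
      have hterm : ∀ j k : Fin n, (if j = k then (0 : Matrix (Fin n) (Fin n) ℂ) else
            ((1:ℂ)/2) • (X j k • single j k (1:ℂ)
              + X k j • single k j (1:ℂ)))
          = (if j = k then 0 else ((1:ℂ)/2) • (X j k • single j k (1:ℂ)))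
            + (if j = k then 0 else ((1:ℂ)/2) • (X k j • single k j (1:ℂ))) := by
        intro j k; split <;> simp [smul_add]
      simp only [hterm, Finset.sum_add_distrib]
      have hswap : (∑ j : Fin n, ∑ k : Fin n, (if j = k then (0 : Matrix (Fin n) (Fin n) ℂ) else
            ((1:ℂ)/2) • (X k j • single k j (1:ℂ))))
          = ∑ j : Fin n, ∑ k : Fin n, (if j = k then 0 else
            ((1:ℂ)/2) • (X j k • single j k (1:ℂ))) := by
        rw [Finset.sum_comm]
        refine Finset.sum_congr rfl fun j _ => Finset.sum_congr rfl fun k _ => ?_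
        by_cases h : j = k
        · simp [h]
        · simp [h, Ne.symm h]
      rw [hswap, ← Finset.sum_add_distrib]
      refine Finset.sum_congr rfl fun j _ => ?_
      rw [← Finset.sum_add_distrib]
      refine Finset.sum_congr rfl fun k _ => ?_
      by_cases h : j = k
      · simp [h]
      · rw [if_neg h, if_neg h]
        module
    have hoffmem : (∑ j, ∑ k, (if j = k then (0 : Matrix (Fin n) (Fin n) ℂ)
        else X j k • single j k (1:ℂ))) ∈ S := by
      rw [← hsum2]
      refine Submodule.sum_mem _ fun j _ => Submodule.sum_mem _ fun k _ => ?_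
      by_cases h : j = k
      · rw [if_pos h]; exact S.zero_mem
      · rw [if_neg h, ← hFG j k h]
        exact S.smul_mem _ (S.add_mem (S.smul_mem _ (hFmem j k h))
          (S.smul_mem _ (hGmem j k h)))
    rw [hsplit]
    exact S.add_mem hdiagmem hoffmem
end

section
/- Let A be a real symmetric n×n matrix and z ∈ ℝⁿ with rank [z, Az, …, A^{n−1}z] = n. Then the real Lie algebra generated by A and zzᵀ equals gl(n,ℝ). -/
open Matrix

attribute [local instance] LieRing.ofAssociativeRing

namespace Stmt5Aux

variable {n : ℕ}

theorem mul_vecMulVec (M : Matrix (Fin n) (Fin n) ℝ) (u w : Fin n → ℝ) :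
    M * vecMulVec u w = vecMulVec (M *ᵥ u) w := by
  ext i j
  simp [mul_apply, vecMulVec_apply, mulVec, dotProduct, Finset.sum_mul, mul_assoc]

theorem vecMulVec_mul (M : Matrix (Fin n) (Fin n) ℝ) (u w : Fin n → ℝ) :
    vecMulVec u w * M = vecMulVec u (Mᵀ *ᵥ w) := by
  ext i j
  simp [mul_apply, vecMulVec_apply, mulVec_transpose, vecMul, dotProduct, Finset.mul_sum,
    mul_assoc]

theorem vecMulVec_mul_vecMulVec (u w x y : Fin n → ℝ) :
    vecMulVec u w * vecMulVec x y = (w ⬝ᵥ x) • vecMulVec u y := by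
  ext i j
  simp only [mul_apply, vecMulVec_apply, Matrix.smul_apply, smul_eq_mul, dotProduct, Finset.sum_mul,
    Finset.mul_sum]
  apply Finset.sum_congr rfl
  intro k _
  ring


variable (A : Matrix (Fin n) (Fin n) ℝ) (z : Fin n → ℝ)

/-- `P i j = (A^i z)(A^j z)ᵀ`. -/
noncomputable def P (i j : ℕ) : Matrix (Fin n) (Fin n) ℝ :=
  vecMulVec ((A ^ i) *ᵥ z) ((A ^ j) *ᵥ z)

theorem dot_pow (hA : A.IsSymm) (a b : ℕ) :
    ((A ^ a) *ᵥ z) ⬝ᵥ ((A ^ b) *ᵥ z) = z ⬝ᵥ ((A ^ (a + b)) *ᵥ z) := by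
  have hsa : (A ^ a)ᵀ = A ^ a := by
    rw [transpose_pow, hA.eq]
  calc ((A ^ a) *ᵥ z) ⬝ᵥ ((A ^ b) *ᵥ z)
      = (z ᵥ* (A ^ a)) ⬝ᵥ ((A ^ b) *ᵥ z) := by rw [← mulVec_transpose, hsa]
    _ = z ⬝ᵥ ((A ^ a) *ᵥ ((A ^ b) *ᵥ z)) := (dotProduct_mulVec z (A ^ a) _).symm
    _ = z ⬝ᵥ ((A ^ (a + b)) *ᵥ z) := by rw [mulVec_mulVec, ← pow_add]

theorem lie_A_P (hA : A.IsSymm) (i j : ℕ) :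
    ⁅A, P A z i j⁆ = P A z (i + 1) j - P A z i (j + 1) := by
  rw [Ring.lie_def, P, P, P, mul_vecMulVec, vecMulVec_mul, hA.eq, mulVec_mulVec, mulVec_mulVec,
    ← pow_succ', ← pow_succ']

theorem lie_P_P (i j k l : ℕ) :
    ⁅P A z i j, P A z k l⁆ =
      (((A ^ j) *ᵥ z) ⬝ᵥ ((A ^ k) *ᵥ z)) • P A z i l
        - (((A ^ l) *ᵥ z) ⬝ᵥ ((A ^ i) *ᵥ z)) • P A z k j := by
  rw [Ring.lie_def, P, P, P, P, vecMulVec_mul_vecMulVec, vecMulVec_mul_vecMulVec]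


section Span

variable (hA : A.IsSymm) (hz : z ⬝ᵥ z ≠ 0)

local notation "S" => LieSubalgebra.lieSpan ℝ (Matrix (Fin n) (Fin n) ℝ) {A, vecMulVec z z}

theorem A_mem : A ∈ S := LieSubalgebra.subset_lieSpan (Set.mem_insert _ _)

theorem P00_mem : P A z 0 0 ∈ S := by
  have : P A z 0 0 = vecMulVec z z := by simp [P]
  rw [this]
  exact LieSubalgebra.subset_lieSpan (by simp)

include hz in
theorem key_mem (i j : ℕ) (hi : P A z i 0 ∈ S) (hj : P A z 0 j ∈ S) : P A z i j ∈ S := by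
  have h := lie_P_P A z i 0 0 j
  simp only [pow_zero, one_mulVec] at h
  have h2 : (z ⬝ᵥ z) • P A z i j
      = ⁅P A z i 0, P A z 0 j⁆ + (((A ^ j) *ᵥ z) ⬝ᵥ ((A ^ i) *ᵥ z)) • P A z 0 0 := by
    rw [h]; module
  have h3 : P A z i j = (z ⬝ᵥ z)⁻¹ • ((z ⬝ᵥ z) • P A z i j) := by
    rw [smul_smul, inv_mul_cancel₀ hz, one_smul]
  rw [h3, h2]
  exact LieSubalgebra.smul_mem _ _ (LieSubalgebra.add_mem _ (LieSubalgebra.lie_mem _ hi hj)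
    (LieSubalgebra.smul_mem _ _ (P00_mem A z)))

include hA hz in
theorem P10_P01_mem : P A z 1 0 ∈ S ∧ P A z 0 1 ∈ S := by
  have hAB : ⁅A, P A z 0 0⁆ ∈ S := LieSubalgebra.lie_mem _ (A_mem A z) (P00_mem A z)
  have h1 : ⁅A, P A z 0 0⁆ = P A z 1 0 - P A z 0 1 := lie_A_P A z hA 0 0
  have hc : ⁅P A z 0 0, ⁅A, P A z 0 0⁆⁆ ∈ S := LieSubalgebra.lie_mem _ (P00_mem A z) hAB
  have h2 : ⁅P A z 0 0, ⁅A, P A z 0 0⁆⁆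
      = (2 * (z ⬝ᵥ (A *ᵥ z))) • P A z 0 0 - (z ⬝ᵥ z) • (P A z 1 0 + P A z 0 1) := by
    rw [h1, lie_sub]
    have ha := lie_P_P A z 0 0 1 0
    have hb := lie_P_P A z 0 0 0 1
    simp only [pow_zero, one_mulVec, pow_one] at ha hb
    rw [ha, hb, dotProduct_comm (A *ᵥ z) z]
    module
  have hsum : P A z 1 0 + P A z 0 1 ∈ S := by
    have h3 : P A z 1 0 + P A z 0 1
        = (z ⬝ᵥ z)⁻¹ • ((2 * (z ⬝ᵥ (A *ᵥ z))) • P A z 0 0 - ⁅P A z 0 0, ⁅A, P A z 0 0⁆⁆) := by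
      rw [h2]
      match_scalars <;> field_simp <;> ring
    rw [h3]
    exact LieSubalgebra.smul_mem _ _ (LieSubalgebra.sub_mem _
      (LieSubalgebra.smul_mem _ _ (P00_mem A z)) hc)
  constructor
  · have : P A z 1 0 = (2⁻¹ : ℝ) • ((P A z 1 0 + P A z 0 1) + ⁅A, P A z 0 0⁆) := by
      rw [h1]; match_scalars <;> norm_num
    rw [this]
    exact LieSubalgebra.smul_mem _ _ (LieSubalgebra.add_mem _ hsum hAB)
  · have : P A z 0 1 = (2⁻¹ : ℝ) • ((P A z 1 0 + P A z 0 1) - ⁅A, P A z 0 0⁆) := by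
      rw [h1]; match_scalars <;> norm_num
    rw [this]
    exact LieSubalgebra.smul_mem _ _ (LieSubalgebra.sub_mem _ hsum hAB)

include hA hz in
theorem P_mem (i j : ℕ) : P A z i j ∈ S := by
  obtain ⟨h10, h01⟩ := P10_P01_mem A z hA hz
  have left : ∀ m, P A z m 0 ∈ S := by
    intro m
    induction m with
    | zero => exact P00_mem A z
    | succ m ih =>
      have hm1 : P A z m 1 ∈ S := key_mem A z hz m 1 ih h01
      have h : P A z (m + 1) 0 = ⁅A, P A z m 0⁆ + P A z m 1 := by
        rw [lie_A_P A z hA]; abel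
      rw [h]
      exact LieSubalgebra.add_mem _ (LieSubalgebra.lie_mem _ (A_mem A z) ih) hm1
  have right : ∀ m, P A z 0 m ∈ S := by
    intro m
    induction m with
    | zero => exact P00_mem A z
    | succ m ih =>
      have hm1 : P A z 1 m ∈ S := key_mem A z hz 1 m h10 ih
      have h : P A z 0 (m + 1) = P A z 1 m - ⁅A, P A z 0 m⁆ := by
        rw [lie_A_P A z hA]; abel
      rw [h]
      exact LieSubalgebra.sub_mem _ hm1 (LieSubalgebra.lie_mem _ (A_mem A z) ih)
  exact key_mem A z hz i j (left i) (right j)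

end Span

end Stmt5Aux

/-- If the walk matrix [z, Az, …, A^{n−1}z] of a real symmetric A has rank n,
then the real Lie algebra generated by A and zzᵀ equals gl(n,ℝ). -/
theorem stmt_5 (n : ℕ) (A : Matrix (Fin n) (Fin n) ℝ) (hA : A.IsSymm) (z : Fin n → ℝ)
    (hW : (Matrix.of fun i j : Fin n => ((A ^ (j : ℕ)) *ᵥ z) i).rank = n) :
    LieSubalgebra.lieSpan ℝ (Matrix (Fin n) (Fin n) ℝ) {A, vecMulVec z z} = ⊤ := by
  rcases Nat.eq_zero_or_pos n with hn | hn
  · subst hn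
    rw [eq_top_iff]
    intro X _
    have hX : X = 0 := by ext i j; exact i.elim0
    rw [hX]
    exact (LieSubalgebra.lieSpan ℝ _ _).zero_mem
  set W : Matrix (Fin n) (Fin n) ℝ := Matrix.of fun i j : Fin n => ((A ^ (j : ℕ)) *ᵥ z) i with hWdef
  -- z ≠ 0
  have hzne : z ≠ 0 := by
    intro h
    have hW0 : W = 0 := by
      ext i j
      simp [hWdef, h, mulVec_zero]
    rw [hW0, Matrix.rank_zero] at hW
    omega
  have hz : z ⬝ᵥ z ≠ 0 := fun h => hzne (dotProduct_self_eq_zero.mp h)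
  -- W is invertible
  have hr : LinearMap.range W.mulVecLin = ⊤ := by
    apply Submodule.eq_top_of_finrank_eq
    rw [Module.finrank_pi, Fintype.card_fin]
    exact hW
  have hsurj : Function.Surjective W.mulVecLin := LinearMap.range_eq_top.mp hr
  have hinj : Function.Injective W.mulVecLin :=
    (LinearMap.injective_iff_surjective).mpr hsurj
  have hdet : W.det ≠ 0 := by
    intro h
    obtain ⟨v, hv, hWv⟩ := (Matrix.exists_mulVec_eq_zero_iff).mpr h
    apply hv
    apply hinj
    simp only [Matrix.mulVecLin_apply, hWv, map_zero]
  have hdetT : Wᵀ.det ≠ 0 := by rwa [Matrix.det_transpose]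
  rw [eq_top_iff]
  intro X _
  set C : Matrix (Fin n) (Fin n) ℝ := W⁻¹ * X * (W⁻¹)ᵀ with hCdef
  have claim1 : W * C * Wᵀ = X := by
    have h1 : W * W⁻¹ = 1 := Matrix.mul_nonsing_inv W (isUnit_iff_ne_zero.mpr hdet)
    have h2 : (W⁻¹)ᵀ * Wᵀ = 1 := by
      rw [Matrix.transpose_nonsing_inv]
      exact Matrix.nonsing_inv_mul Wᵀ (isUnit_iff_ne_zero.mpr hdetT)
    calc W * (W⁻¹ * X * (W⁻¹)ᵀ) * Wᵀ
        = W * W⁻¹ * X * ((W⁻¹)ᵀ * Wᵀ) := by simp only [Matrix.mul_assoc]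
      _ = X := by rw [h1, h2, Matrix.one_mul, Matrix.mul_one]
  have claim2 : W * C * Wᵀ
      = ∑ p : Fin n × Fin n, C p.1 p.2 • Stmt5Aux.P A z (p.1 : ℕ) (p.2 : ℕ) := by
    ext x y
    simp only [Matrix.mul_apply, Matrix.transpose_apply, Matrix.sum_apply, Matrix.smul_apply,
      smul_eq_mul, Stmt5Aux.P, Matrix.vecMulVec_apply, hWdef, Matrix.of_apply,
      Fintype.sum_prod_type, Finset.sum_mul]
    rw [Finset.sum_comm]
    refine Finset.sum_congr rfl fun i _ => Finset.sum_congr rfl fun j _ => ?_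
    ring
  rw [← claim1, claim2]
  exact sum_mem fun p _ => LieSubalgebra.smul_mem _ _ (Stmt5Aux.P_mem A z hA hz _ _)
end

section
/- Let A be a real symmetric n×n matrix such that the graph G(A) of A is connected and all nonzero off-diagonal entries of A have the same sign. If k ≠ j are vertices at graph distance d = d(k,j) in G(A), then the (k,j) entry of A^d is nonzero. -/
open Matrix

lemma key_pos (n : ℕ) (A : Matrix (Fin n) (Fin n) ℝ)
    (G : SimpleGraph (Fin n)) (hG : ∀ i j, G.Adj i j ↔ i ≠ j ∧ A i j ≠ 0)
    (hconn : G.Connected) (hpos : ∀ i j, i ≠ j → 0 ≤ A i j) :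
    ∀ m (k i : Fin n), (G.dist k i = m → 0 < (A ^ m) k i) ∧
      (m < G.dist k i → (A ^ m) k i = 0) := by
  intro m
  induction m with
  | zero =>
    intro k i
    constructor
    · intro h
      have hki : k = i := (hconn k i).dist_eq_zero_iff.mp h
      subst hki
      simp [Matrix.one_apply]
    · intro h
      have hne : k ≠ i := by
        intro he; subst he; simp [SimpleGraph.dist_self] at h
      simp [Matrix.one_apply_ne hne]
  | succ m ih =>
    intro k i
    have hsum : (A ^ (m+1)) k i = ∑ t, (A ^ m) k t * A t i := by
      rw [pow_succ, Matrix.mul_apply]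
    have hadj_dist : ∀ t : Fin n, G.Adj t i → G.dist k i ≤ G.dist k t + 1 := by
      intro t h
      have h1 : G.dist t i ≤ 1 := by
        have := SimpleGraph.dist_le (SimpleGraph.Walk.cons h SimpleGraph.Walk.nil)
        simpa using this
      calc G.dist k i ≤ G.dist k t + G.dist t i := hconn.dist_triangle
        _ ≤ G.dist k t + 1 := by omega
    constructor
    · intro hd
      rw [hsum]
      apply Finset.sum_pos'
      · intro t _
        by_cases hAt : A t i = 0
        · simp [hAt]
        by_cases hti : t = i
        · subst hti
          have : (A ^ m) k t = 0 := (ih k t).2 (by omega)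
          simp [this]
        · have hadj : G.Adj t i := (hG t i).mpr ⟨hti, hAt⟩
          have hge : m ≤ G.dist k t := by
            have := hadj_dist t hadj; omega
          rcases eq_or_lt_of_le hge with he | hl
          · exact mul_nonneg (le_of_lt ((ih k t).1 he.symm)) (hpos t i hti)
          · simp [(ih k t).2 hl]
      · -- penultimate vertex of a geodesic walk
        obtain ⟨p, hp⟩ := hconn.exists_walk_length_eq_dist k i
        rw [hd] at hp
        have hpr : p.reverse.length = m + 1 := by simp [hp]
        obtain ⟨t, h, q, hql⟩ : ∃ t, ∃ _ : G.Adj i t, ∃ q : G.Walk t k, q.length = m := by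
          cases hq : p.reverse with
          | nil => rw [hq] at hpr; simp at hpr
          | @cons _ t _ h q =>
            rw [hq] at hpr
            simp at hpr
            exact ⟨t, h, q, hpr⟩
        have hpr := hql
        have hdkt : G.dist k t = m := by
          have hle : G.dist k t ≤ m := by
            have := SimpleGraph.dist_le q.reverse
            simpa [hpr] using this
          have := hadj_dist t h.symm
          omega
        have h1 : 0 < (A ^ m) k t := (ih k t).1 hdkt
        have hti : t ≠ i := (G.ne_of_adj h.symm)
        have hAt : A t i ≠ 0 := ((hG t i).mp h.symm).2
        refine ⟨t, Finset.mem_univ t, ?_⟩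
        exact mul_pos h1 (lt_of_le_of_ne (hpos t i hti) (Ne.symm hAt))
    · intro hd
      rw [hsum]
      apply Finset.sum_eq_zero
      intro t _
      by_cases hAt : A t i = 0
      · simp [hAt]
      by_cases hti : t = i
      · subst hti
        simp [(ih k t).2 (by omega)]
      · have hadj : G.Adj t i := (hG t i).mpr ⟨hti, hAt⟩
        have : m < G.dist k t := by
          have := hadj_dist t hadj; omega
        simp [(ih k t).2 this]

/-- If G(A) is connected and all nonzero off-diagonal entries of the real
symmetric matrix A have the same sign, and k ≠ j are at distance d in G(A), then
(A^d)_{kj} ≠ 0. -/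
theorem stmt_9 (n : ℕ) (A : Matrix (Fin n) (Fin n) ℝ) (hA : A.IsSymm)
    (G : SimpleGraph (Fin n)) (hG : ∀ i j, G.Adj i j ↔ i ≠ j ∧ A i j ≠ 0)
    (hconn : G.Connected)
    (hsign : (∀ i j, i ≠ j → 0 ≤ A i j) ∨ (∀ i j, i ≠ j → A i j ≤ 0))
    (k j : Fin n) (hkj : k ≠ j) :
    (A ^ (G.dist k j)) k j ≠ 0 := by
  rcases hsign with hpos | hneg
  · exact ne_of_gt ((key_pos n A G hG hconn hpos (G.dist k j) k j).1 rfl)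
  · have hG' : ∀ i j, G.Adj i j ↔ i ≠ j ∧ (-A) i j ≠ 0 := by
      intro i j
      rw [hG i j]
      simp
    have hpos' : ∀ i j, i ≠ j → 0 ≤ (-A) i j := by
      intro i j hij
      simpa using hneg i j hij
    have h := (key_pos n (-A) G hG' hconn hpos' (G.dist k j) k j).1 rfl
    have heq : ((-A) ^ (G.dist k j)) k j = (-1 : ℝ) ^ (G.dist k j) * (A ^ (G.dist k j)) k j := by
      have : (-A : Matrix (Fin n) (Fin n) ℝ) = (-1 : ℝ) • A := by
        ext i j; simp
      rw [this, smul_pow]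
      simp [Matrix.smul_apply]
    rw [heq] at h
    intro hz
    rw [hz, mul_zero] at h
    exact lt_irrefl 0 h
end

section
/- Let A be a real symmetric n×n matrix whose graph G(A) is connected with all nonzero off-diagonal entries of A of the same sign, let S ⊆ {1,…,n}, and let Z = {e_j : j ∈ S} be the corresponding standard basis vectors. Then span P(A,Z) ⊆ L(A,Z), where L(A,Z) is the real Lie algebra generated by A together with the matrices e_j e_jᵀ for j ∈ S, and P(A,Z) = { A^m e_k e_jᵀ A^ℓ : k,j ∈ S, 0 ≤ m,ℓ ≤ n−1 }. -/
open Matrix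

attribute [local instance 100] LieRing.ofAssociativeRing

section Stmt10Aux
variable {n : ℕ}

def EE (k j : Fin n) : Matrix (Fin n) (Fin n) ℝ :=
  vecMulVec (Pi.single k 1) (Pi.single j 1)

lemma key (a b c d : Fin n) (M : Matrix (Fin n) (Fin n) ℝ) :
    EE a b * M * EE c d = M b c • EE a d := by
  ext i j
  simp [EE, vecMulVec, mul_apply, Pi.single_apply, Finset.sum_ite_eq, Finset.mul_sum,
    mul_comm, mul_assoc, mul_left_comm]

-- (I)
lemma id1 (j : Fin n) (A : Matrix (Fin n) (Fin n) ℝ) :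
    ⁅EE j j, ⁅A, EE j j⁆⁆ = (2 * A j j) • EE j j - (A * EE j j + EE j j * A) := by
  have hBB : EE j j * EE j j = EE j j := by simpa using key j j j j 1
  have hBAB : EE j j * A * EE j j = A j j • EE j j := key j j j j A
  simp only [Ring.lie_def, mul_sub, sub_mul, mul_add, add_mul]
  rw [show EE j j * (A * EE j j) = EE j j * A * EE j j by rw [mul_assoc],
    show A * EE j j * EE j j = A * (EE j j * EE j j) by rw [mul_assoc],
    show EE j j * (EE j j * A) = EE j j * EE j j * A by rw [mul_assoc], hBB, hBAB]
  module

-- (II)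
lemma id2 (j : Fin n) (M N : Matrix (Fin n) (Fin n) ℝ) :
    ⁅M * EE j j, EE j j * N⁆ = M * EE j j * N - ((N * M) j j) • EE j j := by
  have hBB : EE j j * EE j j = EE j j := by simpa using key j j j j 1
  have h2 : EE j j * (N * M) * EE j j = (N * M) j j • EE j j := key j j j j (N * M)
  simp only [Ring.lie_def]
  rw [show M * EE j j * (EE j j * N) = M * (EE j j * EE j j) * N by noncomm_ring,
    show EE j j * N * (M * EE j j) = EE j j * (N * M) * EE j j by noncomm_ring, hBB, h2]


-- (V)
lemma id5 (k j : Fin n) (hkj : k ≠ j) (M : Matrix (Fin n) (Fin n) ℝ) :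
    ⁅EE k k * M, EE j j⁆ = (M k j) • EE k j := by
  have h1 : EE k k * M * EE j j = (M k j) • EE k j := key k k j j M
  have h2 : EE j j * EE k k = 0 := by
    have := key j j k k 1
    simpa [one_apply, hkj.symm] using this
  simp only [Ring.lie_def]
  rw [h1, show EE j j * (EE k k * M) = (EE j j * EE k k) * M by rw [mul_assoc], h2]
  simp

-- (VI)
lemma id6 (k j : Fin n) (M : Matrix (Fin n) (Fin n) ℝ) :
    ⁅M * EE k k, EE k j⁆ = M * EE k j - (M j k) • EE k k := by
  have h1 : EE k k * EE k j = EE k j := by simpa [one_apply] using key k k k j 1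
  have h2 : EE k j * M * EE k k = (M j k) • EE k k := key k j k k M
  simp only [Ring.lie_def]
  rw [show M * EE k k * EE k j = M * (EE k k * EE k j) by rw [mul_assoc], h1,
    show EE k j * (M * EE k k) = EE k j * M * EE k k by rw [mul_assoc], h2]

-- (VII)
lemma id7 (k j : Fin n) (M N : Matrix (Fin n) (Fin n) ℝ) :
    ⁅M * EE k j, EE j j * N⁆ = M * EE k j * N - ((N * M) j k) • EE j j := by
  have h1 : EE k j * EE j j = EE k j := by simpa [one_apply] using key k j j j 1
  have h2 : EE j j * (N * M) * EE k j = ((N * M) j k) • EE j j := key j j k j (N * M)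
  simp only [Ring.lie_def]
  rw [show M * EE k j * (EE j j * N) = M * (EE k j * EE j j) * N by noncomm_ring,
    show EE j j * N * (M * EE k j) = EE j j * (N * M) * EE k j by noncomm_ring, h1, h2]




variable (A : Matrix (Fin n) (Fin n) ℝ) (L : LieSubalgebra ℝ (Matrix (Fin n) (Fin n) ℝ))

lemma ABBA (hAL : A ∈ L) {j : Fin n} (hB : EE j j ∈ L) :
    A * EE j j ∈ L ∧ EE j j * A ∈ L := by
  have h := L.lie_mem hB (L.lie_mem hAL hB)
  rw [id1] at h
  have hsum : A * EE j j + EE j j * A ∈ L := by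
    have := L.sub_mem (L.smul_mem (2 * A j j) hB) h
    rwa [sub_sub_cancel] at this
  have hdiff : A * EE j j - EE j j * A ∈ L := by
    have := L.lie_mem hAL hB
    rwa [Ring.lie_def] at this
  constructor
  · have h2 := L.smul_mem ((2:ℝ)⁻¹) (L.add_mem hsum hdiff)
    rwa [show (2:ℝ)⁻¹ • ((A * EE j j + EE j j * A) + (A * EE j j - EE j j * A))
        = A * EE j j by module] at h2
  · have h2 := L.smul_mem ((2:ℝ)⁻¹) (L.sub_mem hsum hdiff)
    rwa [show (2:ℝ)⁻¹ • ((A * EE j j + EE j j * A) - (A * EE j j - EE j j * A))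
        = EE j j * A by module] at h2

lemma powB (hAL : A ∈ L) {j : Fin n} (hB : EE j j ∈ L) (m : ℕ) :
    A ^ m * EE j j ∈ L ∧ EE j j * A ^ m ∈ L := by
  induction m with
  | zero => constructor <;> simpa using hB
  | succ m ih =>
    obtain ⟨ih1, ih2⟩ := ih
    have hBA := (ABBA A L hAL hB).2
    have hAB := (ABBA A L hAL hB).1
    constructor
    · have hmid : A ^ m * EE j j * A ∈ L := by
        have h := L.lie_mem ih1 hBA
        rw [id2] at h
        have := L.add_mem h (L.smul_mem ((A * A ^ m) j j) hB)
        rwa [sub_add_cancel] at this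
      have h := L.add_mem (L.lie_mem hAL ih1) hmid
      rwa [show ⁅A, A ^ m * EE j j⁆ + A ^ m * EE j j * A = A ^ (m+1) * EE j j by
        rw [Ring.lie_def, pow_succ']; noncomm_ring] at h
    · have hmid : A * EE j j * A ^ m ∈ L := by
        have h := L.lie_mem hAB ih2
        rw [id2] at h
        have := L.add_mem h (L.smul_mem ((A ^ m * A) j j) hB)
        rwa [sub_add_cancel] at this
      have h := L.sub_mem hmid (L.lie_mem hAL ih2)
      rwa [show A * EE j j * A ^ m - ⁅A, EE j j * A ^ m⁆ = EE j j * A ^ (m+1) by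
        rw [Ring.lie_def, pow_succ]; noncomm_ring] at h



lemma supp (A : Matrix (Fin n) (Fin n) ℝ) (G : SimpleGraph (Fin n))
    (hG : ∀ i j, G.Adj i j ↔ i ≠ j ∧ A i j ≠ 0) (hconn : G.Connected) :
    ∀ (m : ℕ) (k j : Fin n), (A ^ m) k j ≠ 0 → G.dist k j ≤ m := by
  intro m
  induction m with
  | zero =>
    intro k j h
    rw [pow_zero] at h
    rcases eq_or_ne k j with rfl | hne
    · simp
    · simp [one_apply, hne] at h
  | succ m ih =>
    intro k j h
    rw [pow_succ, mul_apply] at h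
    obtain ⟨i, -, hi⟩ := Finset.exists_ne_zero_of_sum_ne_zero h
    have h1 : (A ^ m) k i ≠ 0 := fun h0 => hi (by rw [h0, zero_mul])
    have h2 : A i j ≠ 0 := fun h0 => hi (by rw [h0, mul_zero])
    have hki := ih k i h1
    rcases eq_or_ne i j with rfl | hij
    · exact hki.trans (Nat.le_succ m)
    · have hadj : G.Adj i j := (hG i j).mpr ⟨hij, h2⟩
      have : G.dist i j ≤ 1 := by
        simpa using SimpleGraph.dist_le (SimpleGraph.Walk.cons hadj SimpleGraph.Walk.nil)
      calc G.dist k j ≤ G.dist k i + G.dist i j := hconn.dist_triangle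
        _ ≤ m + 1 := Nat.add_le_add hki this

lemma sign_lem (A : Matrix (Fin n) (Fin n) ℝ) (G : SimpleGraph (Fin n))
    (hG : ∀ i j, G.Adj i j ↔ i ≠ j ∧ A i j ≠ 0) (hconn : G.Connected)
    (ε : ℝ) (hε1 : ε = 1 ∨ ε = -1) (hε : ∀ i j : Fin n, i ≠ j → 0 ≤ ε * A i j) :
    ∀ (d : ℕ) (k j : Fin n), G.dist k j = d → 0 < ε ^ d * (A ^ d) k j := by
  intro d
  induction d with
  | zero =>
    intro k j h
    have : k = j := (hconn.dist_eq_zero_iff).mp h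
    subst this
    simp [one_apply]
  | succ d ih =>
    intro k j h
    have hkj : k ≠ j := by
      intro rfl'; subst rfl'
      simp [SimpleGraph.dist_self] at h
    -- find penultimate vertex x
    obtain ⟨p, hp⟩ := hconn.exists_walk_length_eq_dist k j
    obtain ⟨x, hjx, q, hq⟩ := (p.reverse).exists_eq_cons_of_ne hkj.symm
    have hqlen : q.length = d := by
      have : p.reverse.length = d + 1 := by rw [SimpleGraph.Walk.length_reverse, hp, h]
      rw [hq, SimpleGraph.Walk.length_cons] at this
      omega
    have hxk : G.dist k x = d := by
      have hle : G.dist k x ≤ d := by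
        rw [SimpleGraph.dist_comm]
        exact hqlen ▸ SimpleGraph.dist_le q
      have hxj : G.dist x j ≤ 1 := by
        simpa using SimpleGraph.dist_le (SimpleGraph.Walk.cons hjx.symm SimpleGraph.Walk.nil)
      have : d + 1 ≤ G.dist k x + 1 := by
        calc d + 1 = G.dist k j := h.symm
          _ ≤ G.dist k x + G.dist x j := hconn.dist_triangle
          _ ≤ G.dist k x + 1 := Nat.add_le_add_left hxj _
      omega
    have hε0 : ε ≠ 0 := by rcases hε1 with rfl | rfl <;> norm_num
    have hxne : x ≠ j := fun h0 => (hjx.ne' h0).elim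
    have hAxj : A x j ≠ 0 := ((hG x j).mp hjx.symm).2
    -- main computation
    rw [pow_succ, pow_succ, mul_apply, Finset.mul_sum]
    apply Finset.sum_pos'
    · intro i _
      rcases eq_or_ne (A i j) 0 with hAij | hAij
      · simp [hAij]
      rcases eq_or_ne i j with rfl | hij
      · have : (A ^ d) k i = 0 := by
          by_contra h0
          have := supp A G hG hconn d k i h0
          omega
        simp [this]
      rcases eq_or_ne ((A ^ d) k i) 0 with h0 | h0
      · simp [h0]
      have hdist : G.dist k i = d := by
        have hle := supp A G hG hconn d k i h0
        have hadj : G.Adj i j := (hG i j).mpr ⟨hij, hAij⟩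
        have hij1 : G.dist i j ≤ 1 := by
          simpa using SimpleGraph.dist_le (SimpleGraph.Walk.cons hadj SimpleGraph.Walk.nil)
        have : d + 1 ≤ G.dist k i + 1 := by
          calc d + 1 = G.dist k j := h.symm
            _ ≤ G.dist k i + G.dist i j := hconn.dist_triangle
            _ ≤ G.dist k i + 1 := Nat.add_le_add_left hij1 _
        omega
      have hpos := ih k i hdist
      have e : ε ^ d * ε * ((A ^ d) k i * A i j) = (ε ^ d * (A ^ d) k i) * (ε * A i j) := by
        ring
      rw [e]
      exact mul_nonneg hpos.le (hε i j hij)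
    · refine ⟨x, Finset.mem_univ x, ?_⟩
      have hpos := ih k x hxk
      have e : ε ^ d * ε * ((A ^ d) k x * A x j) = (ε ^ d * (A ^ d) k x) * (ε * A x j) := by
        ring
      rw [e]
      have h1 : 0 < ε * A x j :=
        lt_of_le_of_ne (hε x j hxne) (fun h0 => hAxj (by
          rcases hε1 with rfl | rfl <;> [skip; skip] <;> nlinarith))
      exact mul_pos hpos h1

end Stmt10Aux

/-- If G(A) is connected with same-sign nonzero off-diagonal entries and
Z = {e_j : j ∈ S}, then span P(A,Z) ⊆ L(A,Z), the Lie algebra generated by A and the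
e_j e_jᵀ, j ∈ S. -/
theorem stmt_10 (n : ℕ) (A : Matrix (Fin n) (Fin n) ℝ) (hA : A.IsSymm)
    (G : SimpleGraph (Fin n)) (hG : ∀ i j, G.Adj i j ↔ i ≠ j ∧ A i j ≠ 0)
    (hconn : G.Connected)
    (hsign : (∀ i j, i ≠ j → 0 ≤ A i j) ∨ (∀ i j, i ≠ j → A i j ≤ 0))
    (S : Set (Fin n)) :
    (Submodule.span ℝ
        {M : Matrix (Fin n) (Fin n) ℝ | ∃ k ∈ S, ∃ j ∈ S, ∃ m ℓ : Fin n,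
          M = A ^ (m : ℕ) * vecMulVec (Pi.single k 1) (Pi.single j 1) * A ^ (ℓ : ℕ)} :
        Set (Matrix (Fin n) (Fin n) ℝ)) ⊆
    (LieSubalgebra.lieSpan ℝ (Matrix (Fin n) (Fin n) ℝ)
        ({A} ∪ {M | ∃ j ∈ S, M = vecMulVec (Pi.single j 1) (Pi.single j 1)}) :
        Set (Matrix (Fin n) (Fin n) ℝ)) := by
  set L := LieSubalgebra.lieSpan ℝ (Matrix (Fin n) (Fin n) ℝ)
      ({A} ∪ {M | ∃ j ∈ S, M = vecMulVec (Pi.single j 1) (Pi.single j 1)}) with hLdef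
  have hAL : A ∈ L := LieSubalgebra.subset_lieSpan (Set.mem_union_left _ rfl)
  have hBmem : ∀ j ∈ S, EE j j ∈ L := fun j hj =>
    LieSubalgebra.subset_lieSpan (Set.mem_union_right _ ⟨j, hj, rfl⟩)
  obtain ⟨ε, hε1, hε⟩ : ∃ ε : ℝ, (ε = 1 ∨ ε = -1) ∧ ∀ i j : Fin n, i ≠ j → 0 ≤ ε * A i j := by
    rcases hsign with hs | hs
    · exact ⟨1, Or.inl rfl, fun i j h => by simpa using hs i j h⟩
    · exact ⟨-1, Or.inr rfl, fun i j h => by nlinarith [hs i j h]⟩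
  have hmain : ∀ k ∈ S, ∀ j ∈ S, ∀ m ℓ : ℕ, A ^ m * EE k j * A ^ ℓ ∈ L := by
    intro k hk j hj m ℓ
    have hBk := hBmem k hk
    have hBj := hBmem j hj
    have hEkj : EE k j ∈ L := by
      rcases eq_or_ne k j with rfl | hkj
      · exact hBj
      · have hc : (A ^ (G.dist k j)) k j ≠ 0 := by
          have hpos := sign_lem A G hG hconn ε hε1 hε (G.dist k j) k j rfl
          intro h0
          rw [h0, mul_zero] at hpos
          exact lt_irrefl _ hpos
        have h := L.lie_mem ((powB A L hAL hBk (G.dist k j)).2) hBj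
        rw [id5 k j hkj] at h
        have h2 := L.smul_mem ((A ^ (G.dist k j)) k j)⁻¹ h
        rwa [smul_smul, inv_mul_cancel₀ hc, one_smul] at h2
    have hAmE : A ^ m * EE k j ∈ L := by
      have h := L.lie_mem ((powB A L hAL hBk m).1) hEkj
      rw [id6] at h
      have h2 := L.add_mem h (L.smul_mem ((A ^ m) j k) hBk)
      rwa [sub_add_cancel] at h2
    have h := L.lie_mem hAmE ((powB A L hAL hBj ℓ).2)
    rw [id7] at h
    have h2 := L.add_mem h (L.smul_mem ((A ^ ℓ * A ^ m) j k) hBj)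
    rwa [sub_add_cancel] at h2
  have hsub : Submodule.span ℝ
      {M : Matrix (Fin n) (Fin n) ℝ | ∃ k ∈ S, ∃ j ∈ S, ∃ m ℓ : Fin n,
        M = A ^ (m : ℕ) * vecMulVec (Pi.single k 1) (Pi.single j 1) * A ^ (ℓ : ℕ)} ≤
      L.toSubmodule := by
    rw [Submodule.span_le]
    rintro M ⟨k, hk, j, hj, m, ℓ, rfl⟩
    exact hmain k hk j hj m ℓ
  intro x hx
  exact hsub hx
end

section
/- Let A be a real symmetric n×n matrix whose graph G(A) is connected, with all nonzero off-diagonal entries of A having the same sign, and let S ⊆ {1,…,n} be a zero forcing set of G(A). Then the real Lie algebra generated by A together with {e_j e_jᵀ : j ∈ S} equals gl(n,ℝ). -/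
open Matrix

attribute [local instance 100] LieRing.ofAssociativeRing

/-- Vertices that eventually become black in the zero forcing process started from `S`:
a vertex is black if it is in `S`, or if it has a black neighbor `u` all of whose other
neighbors are already black (the color change rule). -/
inductive ZeroForces {V : Type*} (G : SimpleGraph V) (S : Set V) : V → Prop
  | init : ∀ v ∈ S, ZeroForces G S v
  | force : ∀ u w, ZeroForces G S u → G.Adj u w →
      (∀ x, G.Adj u x → x ≠ w → ZeroForces G S x) → ZeroForces G S w

/-- `S` is a zero forcing set of `G` if the process turns all vertices black. -/
def IsZeroForcingSet {V : Type*} (G : SimpleGraph V) (S : Set V) : Prop :=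
  ∀ v, ZeroForces G S v

variable {n : ℕ}

local notation "Ek" => fun (i j : Fin n) => Matrix.single i j (1:ℝ)

private lemma sandwich (A : Matrix (Fin n) (Fin n) ℝ) (i j k l : Fin n) :
    Matrix.single i j (1:ℝ) * A * Matrix.single k l (1:ℝ) = Matrix.single i l (A j k) := by
  ext a b
  by_cases hb : b = l
  · subst hb
    by_cases ha : a = i
    · subst ha; simp
    · simp [ha, Ne.symm ha]
  · simp [hb, Ne.symm hb]

private lemma brkt1 (A : Matrix (Fin n) (Fin n) ℝ) (u x : Fin n) (hx : x ≠ u) :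
    ⁅Matrix.single x x (1:ℝ), ⁅Matrix.single u u (1:ℝ), A⁆⁆
      = -(Matrix.single x u (A x u) + Matrix.single u x (A u x)) := by
  rw [Ring.lie_def, Ring.lie_def]
  have h1 : Matrix.single x x (1:ℝ) * Matrix.single u u (1:ℝ) = 0 :=
    Matrix.single_mul_single_of_ne (c := 1) (i := x) (h := hx) (d := 1)
  have h2 : Matrix.single u u (1:ℝ) * Matrix.single x x (1:ℝ) = 0 :=
    Matrix.single_mul_single_of_ne (c := 1) (i := u) (h := Ne.symm hx) (d := 1)
  rw [mul_sub, sub_mul, ← mul_assoc, ← mul_assoc, h1, sandwich, sandwich,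
    mul_assoc, h2, mul_zero]
  rw [zero_mul]; abel

private lemma brkt2 (A : Matrix (Fin n) (Fin n) ℝ) (u : Fin n) :
    ⁅Matrix.single u u (1:ℝ), ⁅Matrix.single u u (1:ℝ), A⁆⁆
      = ∑ k ∈ Finset.univ.erase u,
          (Matrix.single k u (A k u) + Matrix.single u k (A u k)) := by
  classical
  have hEE : Matrix.single u u (1:ℝ) * Matrix.single u u (1:ℝ) = Matrix.single u u 1 := by
    rw [Matrix.single_mul_single_same]; norm_num
  have hexp : ⁅Matrix.single u u (1:ℝ), ⁅Matrix.single u u (1:ℝ), A⁆⁆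
      = Matrix.single u u (1:ℝ) * A + A * Matrix.single u u (1:ℝ)
        - 2 • Matrix.single u u (A u u) := by
    rw [Ring.lie_def, Ring.lie_def, mul_sub, sub_mul, ← mul_assoc, hEE,
      mul_assoc, mul_assoc, ← mul_assoc (Matrix.single u u (1:ℝ)), sandwich,
      hEE]
    abel
  rw [hexp]
  ext a b
  rw [Matrix.sum_apply]
  by_cases ha : a = u <;> by_cases hb : b = u
  · subst ha; subst hb
    rw [Finset.sum_eq_zero]
    · simp; ring
    · intro k hk
      rw [Finset.mem_erase] at hk
      simp [Ne.symm hk.1, hk.1]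
  · subst ha
    rw [Finset.sum_eq_single b]
    · simp [hb, Ne.symm hb]
    · intro k hk hkb
      rw [Finset.mem_erase] at hk
      simp [Ne.symm hk.1, hk.1, Ne.symm hkb, hkb]
    · intro hbmem
      exact absurd (Finset.mem_erase.2 ⟨hb, Finset.mem_univ b⟩) hbmem
  · subst hb
    rw [Finset.sum_eq_single a]
    · simp [ha, Ne.symm ha]
    · intro k hk hka
      rw [Finset.mem_erase] at hk
      simp [Ne.symm hk.1, hk.1, Ne.symm hka, hka]
    · intro hamem
      exact absurd (Finset.mem_erase.2 ⟨ha, Finset.mem_univ a⟩) hamem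
  · rw [Finset.sum_eq_zero]
    · simp [ha, hb, Ne.symm ha, Ne.symm hb]
    · intro k hk
      simp [ha, hb, Ne.symm ha, Ne.symm hb]

private lemma fromF (L : LieSubalgebra ℝ (Matrix (Fin n) (Fin n) ℝ)) (u w : Fin n)
    (huw : u ≠ w) (hEu : Matrix.single u u (1:ℝ) ∈ L)
    (hF : Matrix.single w u (1:ℝ) + Matrix.single u w (1:ℝ) ∈ L) :
    Matrix.single u w (1:ℝ) ∈ L ∧ Matrix.single w u (1:ℝ) ∈ L ∧
      Matrix.single w w (1:ℝ) ∈ L := by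
  have hGbr : ⁅Matrix.single u u (1:ℝ),
      Matrix.single w u (1:ℝ) + Matrix.single u w (1:ℝ)⁆
      = Matrix.single u w (1:ℝ) - Matrix.single w u (1:ℝ) := by
    rw [Ring.lie_def, mul_add, add_mul,
      Matrix.single_mul_single_of_ne (h := Ne.symm huw) (d := (1:ℝ)),
      Matrix.single_mul_single_same, Matrix.single_mul_single_same,
      Matrix.single_mul_single_of_ne (h := huw) (d := (1:ℝ))]
    norm_num
  have hGm : Matrix.single u w (1:ℝ) - Matrix.single w u (1:ℝ) ∈ L := by
    rw [← hGbr]; exact L.lie_mem hEu hF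
  have huwm : Matrix.single u w (1:ℝ) ∈ L := by
    have h := L.smul_mem (2⁻¹ : ℝ) (L.add_mem hF hGm)
    have heq : (2⁻¹ : ℝ) • ((Matrix.single w u (1:ℝ) + Matrix.single u w (1:ℝ))
        + (Matrix.single u w (1:ℝ) - Matrix.single w u (1:ℝ)))
        = Matrix.single u w (1:ℝ) := by
      rw [show (Matrix.single w u (1:ℝ) + Matrix.single u w (1:ℝ))
          + (Matrix.single u w (1:ℝ) - Matrix.single w u (1:ℝ))
          = (2:ℝ) • Matrix.single u w (1:ℝ) by rw [two_smul]; abel, smul_smul]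
      norm_num
    rwa [heq] at h
  have hwum : Matrix.single w u (1:ℝ) ∈ L := by
    have h : (Matrix.single w u (1:ℝ) + Matrix.single u w (1:ℝ))
        - Matrix.single u w (1:ℝ) ∈ L := sub_mem hF huwm
    rwa [add_sub_cancel_right] at h
  refine ⟨huwm, hwum, ?_⟩
  have hbr : ⁅Matrix.single w u (1:ℝ), Matrix.single u w (1:ℝ)⁆
      = Matrix.single w w (1:ℝ) - Matrix.single u u (1:ℝ) := by
    rw [Ring.lie_def, Matrix.single_mul_single_same, Matrix.single_mul_single_same]
    norm_num
  have h := L.add_mem (by rw [← hbr]; exact L.lie_mem hwum huwm : Matrix.single w w (1:ℝ) - Matrix.single u u 1 ∈ L) hEu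
  rwa [sub_add_cancel] at h

private lemma getF (L : LieSubalgebra ℝ (Matrix (Fin n) (Fin n) ℝ))
    {A : Matrix (Fin n) (Fin n) ℝ} (hAs : ∀ i j, A i j = A j i) {u w : Fin n}
    (hAwu : A w u ≠ 0)
    (hD : Matrix.single w u (A w u) + Matrix.single u w (A u w) ∈ L) :
    Matrix.single w u (1:ℝ) + Matrix.single u w (1:ℝ) ∈ L := by
  have h := L.smul_mem (A w u)⁻¹ hD
  rwa [smul_add, Matrix.smul_single, Matrix.smul_single, hAs u w,
    smul_eq_mul, inv_mul_cancel₀ hAwu] at h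

private lemma pair_lemma (L : LieSubalgebra ℝ (Matrix (Fin n) (Fin n) ℝ))
    {A : Matrix (Fin n) (Fin n) ℝ} (hAs : ∀ i j, A i j = A j i) (hAmem : A ∈ L)
    {u w : Fin n} (huw : u ≠ w) (hAuw : A u w ≠ 0)
    (hEu : Matrix.single u u (1:ℝ) ∈ L) (hEw : Matrix.single w w (1:ℝ) ∈ L) :
    Matrix.single u w (1:ℝ) ∈ L ∧ Matrix.single w u (1:ℝ) ∈ L := by
  have hAwu : A w u ≠ 0 := by rwa [hAs w u]
  have hD : Matrix.single w u (A w u) + Matrix.single u w (A u w) ∈ L := by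
    have h := L.lie_mem hEw (L.lie_mem hEu hAmem)
    rw [brkt1 A u w (Ne.symm huw)] at h
    have := neg_mem h
    rwa [neg_neg] at this
  have := fromF L u w huw hEu (getF L hAs hAwu hD)
  exact ⟨this.1, this.2.1⟩

private lemma key_lemma (L : LieSubalgebra ℝ (Matrix (Fin n) (Fin n) ℝ))
    {A : Matrix (Fin n) (Fin n) ℝ} (hAs : ∀ i j, A i j = A j i) (hAmem : A ∈ L)
    {u w : Fin n} (huw : u ≠ w) (hAuw : A u w ≠ 0)
    (hEu : Matrix.single u u (1:ℝ) ∈ L)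
    (hbl : ∀ x, x ≠ u → x ≠ w → A x u ≠ 0 → Matrix.single x x (1:ℝ) ∈ L) :
    Matrix.single w w (1:ℝ) ∈ L := by
  classical
  set B := ⁅Matrix.single u u (1:ℝ), A⁆ with hB
  have hBm : B ∈ L := L.lie_mem hEu hAmem
  set T := (Finset.univ.erase u).erase w with hT
  have hsum : ∀ x ∈ T, ⁅Matrix.single x x (1:ℝ), B⁆ ∈ L := by
    intro x hx
    rw [hT, Finset.mem_erase, Finset.mem_erase] at hx
    by_cases hAxu : A x u = 0
    · have : ⁅Matrix.single x x (1:ℝ), B⁆ = 0 := by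
        rw [hB, brkt1 A u x hx.2.1, hAxu, hAs u x, hAxu, Matrix.single_zero,
          Matrix.single_zero, add_zero, neg_zero]
      rw [this]; exact zero_mem _
    · exact L.lie_mem (hbl x hx.2.1 hx.1 hAxu) hBm
  have hDm : ⁅Matrix.single u u (1:ℝ), B⁆ + ∑ x ∈ T, ⁅Matrix.single x x (1:ℝ), B⁆ ∈ L :=
    L.add_mem (L.lie_mem hEu hBm) (Submodule.sum_mem (L.toSubmodule) hsum)
  have hDeq : ⁅Matrix.single u u (1:ℝ), B⁆ + ∑ x ∈ T, ⁅Matrix.single x x (1:ℝ), B⁆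
      = Matrix.single w u (A w u) + Matrix.single u w (A u w) := by
    rw [hB, brkt2 A u]
    have hrw : ∑ x ∈ T, ⁅Matrix.single x x (1:ℝ), ⁅Matrix.single u u (1:ℝ), A⁆⁆
        = -∑ x ∈ T, (Matrix.single x u (A x u) + Matrix.single u x (A u x)) := by
      rw [← Finset.sum_neg_distrib]
      refine Finset.sum_congr rfl fun x hx => ?_
      rw [hT, Finset.mem_erase, Finset.mem_erase] at hx
      exact brkt1 A u x hx.2.1
    rw [hrw]
    have hw : w ∈ Finset.univ.erase u := Finset.mem_erase.2 ⟨Ne.symm huw, Finset.mem_univ w⟩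
    rw [← Finset.add_sum_erase _ _ hw]
    abel
  have hAwu : A w u ≠ 0 := by rwa [hAs w u]
  rw [hDeq] at hDm
  exact (fromF L u w huw hEu (getF L hAs hAwu hDm)).2.2


/-- If G(A) is connected, all nonzero off-diagonal entries of the real
symmetric matrix A have the same sign, and S is a zero forcing set of G(A), then the real
Lie algebra generated by A and {e_j e_jᵀ : j ∈ S} equals gl(n,ℝ). -/
theorem stmt_14 (n : ℕ) (A : Matrix (Fin n) (Fin n) ℝ) (hA : A.IsSymm)
    (G : SimpleGraph (Fin n)) (hG : ∀ i j, G.Adj i j ↔ i ≠ j ∧ A i j ≠ 0)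
    (hconn : G.Connected)
    (hsign : (∀ i j, i ≠ j → 0 ≤ A i j) ∨ (∀ i j, i ≠ j → A i j ≤ 0))
    (S : Set (Fin n)) (hzf : IsZeroForcingSet G S) :
    LieSubalgebra.lieSpan ℝ (Matrix (Fin n) (Fin n) ℝ)
        ({A} ∪ {M | ∃ j ∈ S, M = vecMulVec (Pi.single j 1) (Pi.single j 1)}) = ⊤ := by
  classical
  set L := LieSubalgebra.lieSpan ℝ (Matrix (Fin n) (Fin n) ℝ)
      ({A} ∪ {M | ∃ j ∈ S, M = vecMulVec (Pi.single j 1) (Pi.single j 1)}) with hLdef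
  have hAs : ∀ i j, A i j = A j i := fun i j => hA.apply j i
  have hAmem : A ∈ L := LieSubalgebra.subset_lieSpan (Set.mem_union_left _ rfl)
  have hgen : ∀ j ∈ S, Matrix.single j j (1:ℝ) ∈ L := by
    intro j hj
    have h : vecMulVec (Pi.single j 1) (Pi.single j 1) ∈ L :=
      LieSubalgebra.subset_lieSpan (Set.mem_union_right _ ⟨j, hj, rfl⟩)
    rwa [Matrix.single_eq_single_vecMulVec_single]
  have hdiag : ∀ v, Matrix.single v v (1:ℝ) ∈ L := by
    intro v
    have hzv := hzf v
    induction hzv with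
    | init v hv => exact hgen v hv
    | force u w hu hadj hnb ihu ihnb =>
      obtain ⟨huw, hAuw⟩ := (hG u w).1 hadj
      refine key_lemma L hAs hAmem huw hAuw ihu ?_
      intro x hxu hxw hAxu
      have hadjx : G.Adj u x := (hG u x).2 ⟨Ne.symm hxu, by rwa [hAs u x]⟩
      exact ihnb x hadjx hxw
  have hwalk : ∀ (u v : Fin n), G.Walk u v → Matrix.single u v (1:ℝ) ∈ L := by
    intro u v p
    induction p with
    | nil => exact hdiag _
    | @cons u b v h p ih =>
      obtain ⟨hub, hAub⟩ := (hG u b).1 h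
      have hpair := pair_lemma L hAs hAmem hub hAub (hdiag u) (hdiag b)
      by_cases huv : u = v
      · subst huv; exact hdiag u
      · have heq : ⁅Matrix.single u b (1:ℝ), Matrix.single b v (1:ℝ)⁆
            = Matrix.single u v (1:ℝ) := by
          rw [Ring.lie_def, Matrix.single_mul_single_same,
            Matrix.single_mul_single_of_ne (h := Ne.symm huv) (d := (1:ℝ))]
          norm_num
        rw [← heq]
        exact L.lie_mem hpair.1 ih
  have hstd : ∀ u v, Matrix.single u v (1:ℝ) ∈ L := fun u v =>
    (hconn.preconnected u v).elim fun p => hwalk u v p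
  rw [eq_top_iff]
  intro M _
  rw [Matrix.matrix_eq_sum_single M]
  refine Submodule.sum_mem L.toSubmodule fun i _ => Submodule.sum_mem L.toSubmodule fun j _ => ?_
  have h1 : Matrix.single i j (M i j) = (M i j) • Matrix.single i j (1:ℝ) := by
    rw [Matrix.smul_single, smul_eq_mul, mul_one]
  rw [h1]
  exact L.smul_mem _ (hstd i j)
end

section
/- For the path graph P₄ on vertices 1–2–3–4 with adjacency matrix A, the walk matrix [e₂, Ae₂, A²e₂, A³e₂] has rank 4 (it equals the matrix with rows (0,1,0,2), (1,0,2,0), (0,1,0,3), (0,0,1,0)), even though {2} is not a zero forcing set of P₄. -/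
open Matrix

/-- For the path P₄ with adjacency matrix A, the walk matrix
[e₂, Ae₂, A²e₂, A³e₂] has rank 4 (it equals the displayed matrix), even though {2} is not
a zero forcing set of P₄. -/
theorem stmt_16 (A : Matrix (Fin 4) (Fin 4) ℝ)
    (hA : A = !![0, 1, 0, 0; 1, 0, 1, 0; 0, 1, 0, 1; 0, 0, 1, 0])
    (G : SimpleGraph (Fin 4)) (hG : ∀ i j, G.Adj i j ↔ i ≠ j ∧ A i j ≠ 0) :
    (Matrix.of fun i j : Fin 4 => ((A ^ (j : ℕ)) *ᵥ Pi.single 1 1) i)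
        = !![0, 1, 0, 2; 1, 0, 2, 0; 0, 1, 0, 3; 0, 0, 1, 0] ∧
    (Matrix.of fun i j : Fin 4 => ((A ^ (j : ℕ)) *ᵥ Pi.single 1 1) i).rank = 4 ∧
    ¬ IsZeroForcingSet G {1} := by
  have hA2 : A ^ 2 = !![1,0,1,0; 0,2,0,1; 1,0,2,0; 0,1,0,1] := by
    rw [hA]; ext i j; fin_cases i <;> fin_cases j <;>
      simp [pow_succ, Matrix.mul_apply, Fin.sum_univ_four, Matrix.vecHead, Matrix.vecTail] <;> norm_num
  have hA3 : A ^ 3 = !![0,2,0,1; 2,0,3,0; 0,3,0,2; 1,0,2,0] := by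
    rw [hA]; ext i j; fin_cases i <;> fin_cases j <;>
      simp [pow_succ, Matrix.mul_apply, Fin.sum_univ_four, Matrix.vecHead, Matrix.vecTail] <;> norm_num
  have heq : (Matrix.of fun i j : Fin 4 => ((A ^ (j : ℕ)) *ᵥ Pi.single 1 1) i)
      = !![0, 1, 0, 2; 1, 0, 2, 0; 0, 1, 0, 3; 0, 0, 1, 0] := by
    ext i j
    fin_cases j <;>
      simp only [Fin.zero_eta, Fin.mk_one, Fin.isValue, Fin.val_zero, Fin.val_one, pow_zero,
        pow_one, show ((⟨2, by norm_num⟩ : Fin 4) : ℕ) = 2 from rfl,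
        show ((⟨3, by norm_num⟩ : Fin 4) : ℕ) = 3 from rfl, hA2, hA3, Matrix.of_apply] <;>
      fin_cases i <;>
      simp [hA, Matrix.mulVec, dotProduct, Fin.sum_univ_four, Pi.single_apply,
        Matrix.one_apply, Matrix.vecHead, Matrix.vecTail]
  refine ⟨heq, ?_, ?_⟩
  · rw [heq]
    have hdet : (!![0, 1, 0, 2; 1, 0, 2, 0; 0, 1, 0, 3; 0, 0, 1, 0] :
        Matrix (Fin 4) (Fin 4) ℝ).det ≠ 0 := by
      simp [Matrix.det_succ_row_zero, Fin.sum_univ_succ, Fin.succAbove]; norm_num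
    have := Matrix.rank_of_isUnit (!![0, 1, 0, 2; 1, 0, 2, 0; 0, 1, 0, 3; 0, 0, 1, 0] :
        Matrix (Fin 4) (Fin 4) ℝ) ((Matrix.isUnit_iff_isUnit_det _).2
        (isUnit_iff_ne_zero.2 hdet))
    simpa using this
  · intro h
    have hadj0 : G.Adj 1 0 := by
      rw [hG, hA]
      refine ⟨by decide, ?_⟩
      norm_num
    have hadj2 : G.Adj 1 2 := by
      rw [hG, hA]
      refine ⟨by decide, ?_⟩
      simp
    have key : ∀ v, ZeroForces G {1} v → v = 1 := by
      intro v hv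
      induction hv with
      | init v hv => simpa using hv
      | force u w hu hadj hall ihu ihall =>
        subst ihu
        have hw := (hG 1 w).1 hadj
        rw [hA] at hw
        obtain ⟨hne, hval⟩ := hw
        have h02 : w = 0 ∨ w = 2 := by
          fin_cases w
          · exact Or.inl rfl
          · exact absurd rfl hne
          · exact Or.inr rfl
          · exact absurd (by norm_num) hval
        rcases h02 with rfl | rfl
        · exact absurd (ihall 2 hadj2 (by decide)) (by decide)
        · exact absurd (ihall 0 hadj0 (by decide)) (by decide)
    exact absurd (key 0 (h 0)) (by decide)
end

section
/- Let B = {b₁,…,b_r} be a basis for the column space of the extended walk matrix W̃(A,Z) of a real symmetric n×n matrix A and Z = {z₁,…,z_s} ⊂ ℝⁿ. Then span P(A,Z) = span{ b_k b_jᵀ : 1 ≤ k,j ≤ r }, and consequently if rank W̃(A,Z) = r < n then dim span P(A,Z) ≤ r² < n², so P(A,Z) does not span ℝ^{n×n}. -/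
open Matrix

private lemma mul_vecMulVec' {n : ℕ} (M : Matrix (Fin n) (Fin n) ℝ) (u v : Fin n → ℝ) :
    M * vecMulVec u v = vecMulVec (M *ᵥ u) v := by
  ext i j
  simp [mul_apply, vecMulVec_apply, mulVec, dotProduct, Finset.sum_mul, mul_assoc]

private lemma vecMulVec_mul' {n : ℕ} (M : Matrix (Fin n) (Fin n) ℝ) (u v : Fin n → ℝ) :
    vecMulVec u v * M = vecMulVec u (Mᵀ *ᵥ v) := by
  ext i j
  simp only [mul_apply, vecMulVec_apply, mulVec, dotProduct, transpose_apply, Finset.mul_sum]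
  exact Finset.sum_congr rfl (fun k _ => by ring)

private noncomputable def outerL (n : ℕ) :
    (Fin n → ℝ) →ₗ[ℝ] (Fin n → ℝ) →ₗ[ℝ] Matrix (Fin n) (Fin n) ℝ :=
  LinearMap.mk₂ ℝ vecMulVec
    (fun u u' v => by ext i j; simp [vecMulVec_apply, add_mul])
    (fun c u v => by ext i j; simp [vecMulVec_apply, mul_assoc])
    (fun u v v' => by ext i j; simp [vecMulVec_apply, mul_add])
    (fun c u v => by ext i j; simp [vecMulVec_apply]; ring)

/-- If b₁,…,b_r is a basis for the column space of the extended walk matrix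
W̃(A,Z), then span P(A,Z) = span{b_k b_jᵀ}, and if r < n then
dim span P(A,Z) ≤ r² < n², so P(A,Z) does not span ℝ^{n×n}. -/
theorem stmt_17 (n s r : ℕ) (A : Matrix (Fin n) (Fin n) ℝ) (hA : A.IsSymm)
    (z : Fin s → (Fin n → ℝ)) (b : Fin r → (Fin n → ℝ))
    (hind : LinearIndependent ℝ b)
    (hspan : Submodule.span ℝ (Set.range b)
      = Submodule.span ℝ {v : Fin n → ℝ | ∃ (k : Fin s) (m : Fin n), v = A ^ (m : ℕ) *ᵥ z k}) :
    Submodule.span ℝ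
        {M : Matrix (Fin n) (Fin n) ℝ | ∃ (k j : Fin s) (m ℓ : Fin n),
          M = A ^ (m : ℕ) * vecMulVec (z k) (z j) * A ^ (ℓ : ℕ)}
      = Submodule.span ℝ
        {M : Matrix (Fin n) (Fin n) ℝ | ∃ k j : Fin r, M = vecMulVec (b k) (b j)} ∧
    (r < n →
      Module.finrank ℝ (Submodule.span ℝ
        {M : Matrix (Fin n) (Fin n) ℝ | ∃ (k j : Fin s) (m ℓ : Fin n),
          M = A ^ (m : ℕ) * vecMulVec (z k) (z j) * A ^ (ℓ : ℕ)}) ≤ r ^ 2 ∧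
      Submodule.span ℝ
        {M : Matrix (Fin n) (Fin n) ℝ | ∃ (k j : Fin s) (m ℓ : Fin n),
          M = A ^ (m : ℕ) * vecMulVec (z k) (z j) * A ^ (ℓ : ℕ)} ≠ ⊤) := by
  classical
  set S : Set (Fin n → ℝ) := {v : Fin n → ℝ | ∃ (k : Fin s) (m : Fin n), v = A ^ (m : ℕ) *ᵥ z k}
  have key : ∀ (u v : Fin n → ℝ) (m ℓ : Fin n),
      A ^ (m : ℕ) * vecMulVec u v * A ^ (ℓ : ℕ)
        = vecMulVec (A ^ (m : ℕ) *ᵥ u) (A ^ (ℓ : ℕ) *ᵥ v) := by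
    intro u v m ℓ
    rw [mul_vecMulVec', vecMulVec_mul', (hA.pow (ℓ : ℕ)).eq]
  have hPset : {M : Matrix (Fin n) (Fin n) ℝ | ∃ (k j : Fin s) (m ℓ : Fin n),
        M = A ^ (m : ℕ) * vecMulVec (z k) (z j) * A ^ (ℓ : ℕ)}
      = Set.image2 (fun u v => (outerL n) u v) S S := by
    ext M
    constructor
    · rintro ⟨k, j, m, ℓ, rfl⟩
      exact ⟨_, ⟨k, m, rfl⟩, _, ⟨j, ℓ, rfl⟩, (key (z k) (z j) m ℓ).symm⟩
    · rintro ⟨u, ⟨k, m, rfl⟩, v, ⟨j, ℓ, rfl⟩, rfl⟩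
      exact ⟨k, j, m, ℓ, (key (z k) (z j) m ℓ).symm⟩
  have hBset : {M : Matrix (Fin n) (Fin n) ℝ | ∃ k j : Fin r, M = vecMulVec (b k) (b j)}
      = Set.image2 (fun u v => (outerL n) u v) (Set.range b) (Set.range b) := by
    ext M
    constructor
    · rintro ⟨k, j, rfl⟩
      exact ⟨_, ⟨k, rfl⟩, _, ⟨j, rfl⟩, rfl⟩
    · rintro ⟨u, ⟨k, rfl⟩, v, ⟨j, rfl⟩, rfl⟩
      exact ⟨k, j, rfl⟩
  have hmain : Submodule.span ℝ
        {M : Matrix (Fin n) (Fin n) ℝ | ∃ (k j : Fin s) (m ℓ : Fin n),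
          M = A ^ (m : ℕ) * vecMulVec (z k) (z j) * A ^ (ℓ : ℕ)}
      = Submodule.span ℝ
        {M : Matrix (Fin n) (Fin n) ℝ | ∃ k j : Fin r, M = vecMulVec (b k) (b j)} := by
    rw [hPset, hBset, ← Submodule.map₂_span_span ℝ (outerL n) S S,
      ← Submodule.map₂_span_span ℝ (outerL n) (Set.range b) (Set.range b), hspan]
  refine ⟨hmain, fun hrn => ?_⟩
  have hfr : Module.finrank ℝ (Submodule.span ℝ
      {M : Matrix (Fin n) (Fin n) ℝ | ∃ k j : Fin r, M = vecMulVec (b k) (b j)}) ≤ r ^ 2 := by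
    have hrange : {M : Matrix (Fin n) (Fin n) ℝ | ∃ k j : Fin r, M = vecMulVec (b k) (b j)}
        = Set.range (fun p : Fin r × Fin r => vecMulVec (b p.1) (b p.2)) := by
      ext M
      constructor
      · rintro ⟨k, j, rfl⟩; exact ⟨(k, j), rfl⟩
      · rintro ⟨⟨k, j⟩, rfl⟩; exact ⟨k, j, rfl⟩
    rw [hrange]
    calc Module.finrank ℝ (Submodule.span ℝ
          (Set.range (fun p : Fin r × Fin r => vecMulVec (b p.1) (b p.2))))
        ≤ (Set.range (fun p : Fin r × Fin r => vecMulVec (b p.1) (b p.2))).toFinset.card :=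
          finrank_span_le_card _
      _ ≤ Fintype.card (Fin r × Fin r) := by
          rw [Set.toFinset_card]; exact Fintype.card_range_le _
      _ = r ^ 2 := by simp [sq]
  rw [hmain]
  refine ⟨hfr, fun htop => ?_⟩
  have h1 : Module.finrank ℝ (Matrix (Fin n) (Fin n) ℝ) = n * n := by
    rw [Module.finrank_matrix]; simp
  have h2 : Module.finrank ℝ (Submodule.span ℝ
      {M : Matrix (Fin n) (Fin n) ℝ | ∃ k j : Fin r, M = vecMulVec (b k) (b j)}) = n * n := by
    rw [htop, finrank_top, h1]
  have : n * n ≤ r ^ 2 := h2 ▸ hfr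
  have hlt : r ^ 2 < n * n := by
    rw [← sq]
    exact Nat.pow_lt_pow_left hrn (by norm_num)
  omega
end
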